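/- Let N be a semi-binary tree-child network and S a partial tree-child sequence each of whose elements reduces something in N when applied in order. Then there exists a minimal TCS for N that starts with S. Hence tree-child networks can be cherry-picked in any (tree-child-respecting) order. -/

import Mathlib

open scoped Classical

/-- A (representation of a) rooted phylogenetic network: vertices are natural
numbers, `E` is the edge set, `root` the root, `taxa` the set of taxa labelling
the leaves via `label`. -/
structure Network (X : Type) where
  V : Finset ℕ
  E : Finset (ℕ × ℕ)
  root : ℕ
  taxa : Finset X
  label : X → ℕ

namespace Network

variable {X : Type}

noncomputable def indeg (N : Network X) (v : ℕ) : ℕ :=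
  (N.E.filter (fun e => e.2 = v)).card

noncomputable def outdeg (N : Network X) (v : ℕ) : ℕ :=
  (N.E.filter (fun e => e.1 = v)).card

noncomputable def parents (N : Network X) (v : ℕ) : Finset ℕ :=
  (N.E.filter (fun e => e.2 = v)).image Prod.fst

noncomputable def children (N : Network X) (v : ℕ) : Finset ℕ :=
  (N.E.filter (fun e => e.1 = v)).image Prod.snd

/-- The parent of a vertex (meaningful when the vertex has a unique parent,
e.g. for leaves). -/
noncomputable def theParent (N : Network X) (v : ℕ) : ℕ :=
  (N.parents v).min.untopD 0

def IsLeafNode (N : Network X) (v : ℕ) : Prop := N.indeg v = 1 ∧ N.outdeg v = 0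

def IsTreeNode (N : Network X) (v : ℕ) : Prop := N.indeg v = 1 ∧ 2 ≤ N.outdeg v

def IsRetic (N : Network X) (v : ℕ) : Prop := 2 ≤ N.indeg v ∧ N.outdeg v = 1

/-- Well-formedness: a phylogenetic network has a single outdegree-1, indegree-0
root, leaves bijectively labelled by the taxa, all other nodes tree nodes or
reticulations, and it is acyclic. -/
def IsPhylo (N : Network X) : Prop :=
  N.root ∈ N.V ∧ N.indeg N.root = 0 ∧ N.outdeg N.root = 1 ∧
  (∀ e ∈ N.E, e.1 ∈ N.V ∧ e.2 ∈ N.V) ∧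
  Set.InjOn N.label ↑N.taxa ∧
  (∀ x ∈ N.taxa, N.label x ∈ N.V ∧ N.IsLeafNode (N.label x)) ∧
  (∀ v ∈ N.V, N.IsLeafNode v → ∃ x ∈ N.taxa, N.label x = v) ∧
  (∀ v ∈ N.V, v = N.root ∨ N.IsLeafNode v ∨ N.IsTreeNode v ∨ N.IsRetic v) ∧
  (∀ v : ℕ, ¬ Relation.TransGen (fun a b => (a, b) ∈ N.E) v v)

def SemiBinary (N : Network X) : Prop := ∀ v ∈ N.V, N.IsTreeNode v → N.outdeg v = 2

def IsBinary (N : Network X) : Prop :=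
  N.SemiBinary ∧ ∀ v ∈ N.V, N.IsRetic v → N.indeg v = 2

def StackFree (N : Network X) : Prop :=
  ∀ e ∈ N.E, ¬ (N.IsRetic e.1 ∧ N.IsRetic e.2)

def IsTreeChild (N : Network X) : Prop :=
  N.StackFree ∧
  ∀ v ∈ N.V, N.IsTreeNode v → ∃ c ∈ N.children v, N.IsTreeNode c ∨ N.IsLeafNode c

def IsTree (N : Network X) : Prop := ∀ v ∈ N.V, ¬ N.IsRetic v

/-- Number of reticulation edges minus number of reticulations. -/
noncomputable def reticulationNumber (N : Network X) : ℕ :=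
  (N.E.filter (fun e => N.IsRetic e.2)).card - (N.V.filter (fun v => N.IsRetic v)).card

/-- `(x, y)` is a cherry: two distinct leaves sharing a parent. -/
def IsCherry (N : Network X) (x y : X) : Prop :=
  x ∈ N.taxa ∧ y ∈ N.taxa ∧ x ≠ y ∧
  ∃ p : ℕ, (p, N.label x) ∈ N.E ∧ (p, N.label y) ∈ N.E

/-- `(x, y)` is a reticulated cherry: the parent of `x` is a reticulation, the
parent of `y` a tree node which is also a parent of the parent of `x`. -/
def IsRetCherry (N : Network X) (x y : X) : Prop :=
  x ∈ N.taxa ∧ y ∈ N.taxa ∧ x ≠ y ∧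
  ∃ px py : ℕ, (px, N.label x) ∈ N.E ∧ (py, N.label y) ∈ N.E ∧
    N.IsRetic px ∧ N.IsTreeNode py ∧ (py, px) ∈ N.E

def ReduciblePair (N : Network X) (x y : X) : Prop :=
  N.IsCherry x y ∨ N.IsRetCherry x y

noncomputable def delVert (N : Network X) (v : ℕ) : Network X :=
  { V := N.V.erase v,
    E := N.E.filter (fun e => e.1 ≠ v ∧ e.2 ≠ v),
    root := N.root, taxa := N.taxa, label := N.label }

noncomputable def delEdge (N : Network X) (e : ℕ × ℕ) : Network X :=
  { N with E := N.E.erase e }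

/-- Suppress a degree-2 (indegree-1, outdegree-1) vertex. -/
noncomputable def suppress (N : Network X) (v : ℕ) : Network X :=
  if N.indeg v = 1 ∧ N.outdeg v = 1 then
    { V := N.V.erase v,
      E := (N.E.filter (fun e => e.1 ≠ v ∧ e.2 ≠ v)) ∪ (N.parents v ×ˢ N.children v),
      root := N.root, taxa := N.taxa, label := N.label }
  else N

/-- Reduce an ordered pair `(x, y)`: in the cherry case delete the leaf `x` and
suppress its parent; in the reticulated-cherry case delete the reticulation edge
between the two parents and suppress the resulting degree-2 vertices; otherwise
do nothing. -/
noncomputable def reducePair (N : Network X) (c : X × X) : Network X :=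
  if N.IsCherry c.1 c.2 then
    suppress
      { V := N.V.erase (N.label c.1),
        E := N.E.filter (fun e => e.1 ≠ N.label c.1 ∧ e.2 ≠ N.label c.1),
        root := N.root, taxa := N.taxa.erase c.1, label := N.label }
      (N.theParent (N.label c.1))
  else if N.IsRetCherry c.1 c.2 then
    (((N.delEdge (N.theParent (N.label c.2), N.theParent (N.label c.1))).suppress
        (N.theParent (N.label c.2))).suppress (N.theParent (N.label c.1)))
  else N

/-- Successive reduction of a network by a sequence of ordered pairs. -/
noncomputable def reduceSeq (N : Network X) (S : List (X × X)) : Network X :=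
  S.foldl (fun M c => M.reducePair c) N

/-- A network consisting of a single leaf, its root, and the edge between them. -/
def IsSingleLeaf (N : Network X) : Prop :=
  ∃ x ∈ N.taxa, N.V = {N.root, N.label x} ∧ N.E = {(N.root, N.label x)} ∧
    N.root ≠ N.label x

/-- `S` reduces `N` to a single-leaf network. -/
def Reduces (S : List (X × X)) (N : Network X) : Prop :=
  (N.reduceSeq S).IsSingleLeaf

/-- A cherry-picking sequence: ordered pairs of distinct taxa such that each
second coordinate reappears later as a first coordinate, or is the second
coordinate of the last pair. -/
def IsCPS (S : List (X × X)) : Prop :=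
  (∀ p ∈ S, p.1 ≠ p.2) ∧
  ∀ (i : ℕ) (hi : i < S.length),
    ((S.get ⟨i, hi⟩).2 ∈ (S.drop (i + 1)).map Prod.fst) ∨
    (∃ q, S.getLast? = some q ∧ (S.get ⟨i, hi⟩).2 = q.2)

/-- A tree-child sequence: a CPS in which a leaf appearing as a first coordinate
never appears later as a second coordinate. -/
def IsTCS (S : List (X × X)) : Prop :=
  IsCPS S ∧
  ∀ (i j : ℕ) (hi : i < S.length) (hj : j < S.length),
    i < j → (S.get ⟨i, hi⟩).1 ≠ (S.get ⟨j, hj⟩).2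

def IsPartialCPS (S : List (X × X)) : Prop := ∃ T, IsCPS (S ++ T)

def IsPartialTCS (S : List (X × X)) : Prop := ∃ T, IsTCS (S ++ T)

/-- A minimal CPS for `N`: a CPS reducing `N` in which every pair changes the
network. -/
def IsMinimalCPS (S : List (X × X)) (N : Network X) : Prop :=
  IsCPS S ∧ Reduces S N ∧
  ∀ i < S.length, N.reduceSeq (S.take (i + 1)) ≠ N.reduceSeq (S.take i)

def IsMinimalTCS (S : List (X × X)) (N : Network X) : Prop :=
  IsTCS S ∧ Reduces S N ∧
  ∀ i < S.length, N.reduceSeq (S.take (i + 1)) ≠ N.reduceSeq (S.take i)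

/-- A cherry-picking network: a phylogenetic network reducible by some CPS. -/
def IsCPN (N : Network X) : Prop :=
  N.IsPhylo ∧ ∃ S, IsCPS S ∧ Reduces S N

/-- A directed path in `N`, given as its list of vertices. -/
def IsDipath (N : Network X) (l : List ℕ) : Prop :=
  l.Chain' (fun a b => (a, b) ∈ N.E)

def pathEdges (l : List ℕ) : List (ℕ × ℕ) := l.zip l.tail

/-- An embedding of `N'` into `N`: an injective node map and a map of edges to
edge-disjoint directed paths, respecting the node map and the leaf labels. -/
def IsEmbedding (N' N : Network X) (f : ℕ → ℕ) (g : ℕ × ℕ → List ℕ) : Prop :=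
  (∀ v ∈ N'.V, f v ∈ N.V) ∧
  Set.InjOn f ↑N'.V ∧
  (∀ x ∈ N'.taxa, f (N'.label x) = N.label x) ∧
  (∀ e ∈ N'.E, N.IsDipath (g e) ∧ (g e).head? = some (f e.1) ∧
    (g e).getLast? = some (f e.2)) ∧
  (∀ e ∈ N'.E, ∀ e' ∈ N'.E, e ≠ e' →
    ∀ p ∈ pathEdges (g e), p ∉ pathEdges (g e'))

/-- `N'` is a subnetwork of `N` if `N'` embeds into `N`. -/
def IsSubnetwork (N' N : Network X) : Prop :=
  ∃ f g, IsEmbedding N' N f g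

/-- Contract the edge `(u, v)`, identifying `v` with `u`. -/
noncomputable def contractEdge (N : Network X) (u v : ℕ) : Network X :=
  { V := N.V.erase v,
    E := (N.E.erase (u, v)).image
      (fun e => ((if e.1 = v then u else e.1), (if e.2 = v then u else e.2))),
    root := if N.root = v then u else N.root,
    taxa := N.taxa,
    label := fun x => if N.label x = v then u else N.label x }

def ContractStep (N M : Network X) : Prop :=
  ∃ u v : ℕ, (u, v) ∈ N.E ∧ M = N.contractEdge u v

/-- `N` is a refinement of `M` if `M` can be obtained from `N` by contracting
some edges. -/
def IsRefinement (N M : Network X) : Prop :=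
  Relation.ReflTransGen ContractStep N M

/-- `N` contains `M` if some refinement of `M` is a subnetwork of `N`. -/
def Contains (N M : Network X) : Prop :=
  ∃ M' : Network X, IsRefinement M' M ∧ IsSubnetwork M' N

/-- Isomorphism of labelled networks. -/
def Isomorphic (N N' : Network X) : Prop :=
  N.taxa = N'.taxa ∧
  ∃ f : ℕ → ℕ, Set.BijOn f ↑N.V ↑N'.V ∧
    (∀ u ∈ N.V, ∀ v ∈ N.V, ((u, v) ∈ N.E ↔ (f u, f v) ∈ N'.E)) ∧
    f N.root = N'.root ∧
    (∀ x ∈ N.taxa, f (N.label x) = N'.label x)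

end Network

section Aux

namespace Network

variable {X : Type}

lemma mem_parents_iff (M : Network X) {p v : ℕ} : p ∈ M.parents v ↔ (p, v) ∈ M.E := by
  simp only [parents, Finset.mem_image, Finset.mem_filter]
  constructor
  · rintro ⟨⟨a, b⟩, ⟨he, hb⟩, ha⟩; subst hb; subst ha; exact he
  · intro h; exact ⟨(p, v), ⟨h, rfl⟩, rfl⟩

lemma mem_children_iff (M : Network X) {v c : ℕ} : c ∈ M.children v ↔ (v, c) ∈ M.E := by
  simp only [children, Finset.mem_image, Finset.mem_filter]
  constructor
  · rintro ⟨⟨a, b⟩, ⟨he, hb⟩, ha⟩; subst hb; subst ha; exact he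
  · intro h; exact ⟨(v, c), ⟨h, rfl⟩, rfl⟩

lemma indeg_pos_of_mem (M : Network X) {p v : ℕ} (h : (p, v) ∈ M.E) : 1 ≤ M.indeg v := by
  have : (p, v) ∈ M.E.filter (fun e => e.2 = v) := Finset.mem_filter.2 ⟨h, rfl⟩
  exact Finset.card_pos.2 ⟨_, this⟩

lemma outdeg_pos_of_mem (M : Network X) {v c : ℕ} (h : (v, c) ∈ M.E) : 1 ≤ M.outdeg v := by
  have : (v, c) ∈ M.E.filter (fun e => e.1 = v) := Finset.mem_filter.2 ⟨h, rfl⟩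
  exact Finset.card_pos.2 ⟨_, this⟩

lemma not_mem_of_indeg_zero (M : Network X) {p v : ℕ} (h : M.indeg v = 0) : (p, v) ∉ M.E := by
  intro hm
  have := M.indeg_pos_of_mem hm
  omega

lemma not_mem_of_outdeg_zero (M : Network X) {v c : ℕ} (h : M.outdeg v = 0) : (v, c) ∉ M.E := by
  intro hm
  have := M.outdeg_pos_of_mem hm
  omega

/-- Unique parent from indegree one. -/
lemma exists_unique_parent (M : Network X) {v : ℕ} (h : M.indeg v = 1) :
    ∃ p, (p, v) ∈ M.E ∧ ∀ w, (w, v) ∈ M.E → w = p := by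
  obtain ⟨e, he⟩ := Finset.card_eq_one.1 h
  have hmem : e ∈ M.E.filter (fun e => e.2 = v) := by rw [he]; exact Finset.mem_singleton_self e
  obtain ⟨heE, hev⟩ := Finset.mem_filter.1 hmem
  refine ⟨e.1, ?_, ?_⟩
  · rwa [show (e.1, v) = e by rw [← hev]]
  · intro w hw
    have : (w, v) ∈ M.E.filter (fun e => e.2 = v) := Finset.mem_filter.2 ⟨hw, rfl⟩
    rw [he, Finset.mem_singleton] at this
    rw [← this]

lemma exists_unique_child (M : Network X) {v : ℕ} (h : M.outdeg v = 1) :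
    ∃ c, (v, c) ∈ M.E ∧ ∀ w, (v, w) ∈ M.E → w = c := by
  obtain ⟨e, he⟩ := Finset.card_eq_one.1 h
  have hmem : e ∈ M.E.filter (fun e => e.1 = v) := by rw [he]; exact Finset.mem_singleton_self e
  obtain ⟨heE, hev⟩ := Finset.mem_filter.1 hmem
  refine ⟨e.2, ?_, ?_⟩
  · rwa [show (v, e.2) = e by rw [← hev]]
  · intro w hw
    have : (v, w) ∈ M.E.filter (fun e => e.1 = v) := Finset.mem_filter.2 ⟨hw, rfl⟩
    rw [he, Finset.mem_singleton] at this
    rw [← this]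

lemma parents_eq_singleton (M : Network X) {v p : ℕ} (hp : (p, v) ∈ M.E)
    (hu : ∀ w, (w, v) ∈ M.E → w = p) : M.parents v = {p} := by
  apply Finset.eq_singleton_iff_unique_mem.2
  exact ⟨(M.mem_parents_iff).2 hp, fun w hw => hu w ((M.mem_parents_iff).1 hw)⟩

lemma theParent_eq (M : Network X) {v p : ℕ} (hp : (p, v) ∈ M.E)
    (hu : ∀ w, (w, v) ∈ M.E → w = p) : M.theParent v = p := by
  rw [theParent, M.parents_eq_singleton hp hu, Finset.min_singleton]
  rfl

/-- Two children from outdegree two. -/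
lemma exists_two_children (M : Network X) {v : ℕ} (h : M.outdeg v = 2) :
    ∃ c₁ c₂, c₁ ≠ c₂ ∧ (v, c₁) ∈ M.E ∧ (v, c₂) ∈ M.E ∧
      ∀ w, (v, w) ∈ M.E → w = c₁ ∨ w = c₂ := by
  obtain ⟨e₁, e₂, hne, he⟩ := Finset.card_eq_two.1 h
  have h1 : e₁ ∈ M.E.filter (fun e => e.1 = v) := by rw [he]; simp
  have h2 : e₂ ∈ M.E.filter (fun e => e.1 = v) := by rw [he]; simp
  obtain ⟨h1E, h1v⟩ := Finset.mem_filter.1 h1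
  obtain ⟨h2E, h2v⟩ := Finset.mem_filter.1 h2
  refine ⟨e₁.2, e₂.2, ?_, ?_, ?_, ?_⟩
  · intro hc; apply hne; apply Prod.ext (by rw [h1v, h2v]) hc
  · rwa [show (v, e₁.2) = e₁ by rw [← h1v]]
  · rwa [show (v, e₂.2) = e₂ by rw [← h2v]]
  · intro w hw
    have : (v, w) ∈ M.E.filter (fun e => e.1 = v) := Finset.mem_filter.2 ⟨hw, rfl⟩
    rw [he, Finset.mem_insert, Finset.mem_singleton] at this
    rcases this with h' | h'
    · left; rw [← h']
    · right; rw [← h']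

/-- No self-loops and no 2-cycles under acyclicity. -/
lemma no_self_loop (M : Network X)
    (hac : ∀ v : ℕ, ¬ Relation.TransGen (fun a b => (a, b) ∈ M.E) v v) {v : ℕ} :
    (v, v) ∉ M.E := fun h => hac v (Relation.TransGen.single h)

lemma no_two_cycle (M : Network X)
    (hac : ∀ v : ℕ, ¬ Relation.TransGen (fun a b => (a, b) ∈ M.E) v v) {u v : ℕ}
    (h1 : (u, v) ∈ M.E) (h2 : (v, u) ∈ M.E) : False :=
  hac u (Relation.TransGen.head h1 (Relation.TransGen.single h2))

/-- Lifting acyclicity along edge-to-path maps. -/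
lemma acyclic_of_lift {r r' : ℕ → ℕ → Prop}
    (hlift : ∀ a b, r' a b → Relation.TransGen r a b)
    (hac : ∀ v, ¬ Relation.TransGen r v v) :
    ∀ v, ¬ Relation.TransGen r' v v := by
  intro v hv
  apply hac v
  have : Relation.TransGen (Relation.TransGen r) v v := Relation.TransGen.mono hlift v v hv
  rwa [Relation.transGen_idem] at this

/-- A finite nonempty set has an element with no strict successor in the set. -/
lemma exists_maximal_finset (r : ℕ → ℕ → Prop) (htr : Transitive r)
    (hirr : ∀ v, ¬ r v v) (s : Finset ℕ) (hs : s.Nonempty) :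
    ∃ a ∈ s, ∀ b ∈ s, ¬ r a b := by
  classical
  induction s using Finset.strongInduction with
  | _ s ih =>
    obtain ⟨a, ha⟩ := hs
    by_cases hsucc : ∃ b ∈ s, r a b
    · obtain ⟨b, hb, hab⟩ := hsucc
      -- restrict to elements above a
      set t := s.filter (fun c => r a c) with ht
      have htne : t.Nonempty := ⟨b, Finset.mem_filter.2 ⟨hb, hab⟩⟩
      have hts : t ⊂ s := by
        rw [Finset.ssubset_iff_of_subset (Finset.filter_subset _ _)]
        exact ⟨a, ha, by simp [ht, hirr a]⟩
      obtain ⟨c, hct, hcmax⟩ := ih t hts htne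
      refine ⟨c, Finset.mem_filter.1 hct |>.1, ?_⟩
      intro d hd hcd
      have hac' : r a c := (Finset.mem_filter.1 hct).2
      have : d ∈ t := Finset.mem_filter.2 ⟨hd, htr hac' hcd⟩
      exact hcmax d this hcd
    · push_neg at hsucc
      exact ⟨a, ha, hsucc⟩

end Network

end Aux

section Aux2

namespace Network

variable {X : Type}

lemma children_eq_singleton (M : Network X) {v c : ℕ} (hc : (v, c) ∈ M.E)
    (hu : ∀ w, (v, w) ∈ M.E → w = c) : M.children v = {c} := by
  apply Finset.eq_singleton_iff_unique_mem.2
  exact ⟨(M.mem_children_iff).2 hc, fun w hw => hu w ((M.mem_children_iff).1 hw)⟩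

lemma deg_count {R A E' : Finset (ℕ × ℕ)} (E : Finset (ℕ × ℕ))
    (hE' : E' = (E \ R) ∪ A) (hR : R ⊆ E) (hA : Disjoint A E) (q : ℕ × ℕ → Prop)
    [DecidablePred q] :
    (E'.filter q).card = (E.filter q).card - (R.filter q).card + (A.filter q).card := by
  subst hE'
  rw [Finset.filter_union]
  have hsd : (E \ R).filter q = E.filter q \ R.filter q := by
    ext e; simp only [Finset.mem_filter, Finset.mem_sdiff]; tauto
  have hdisj : Disjoint (E.filter q \ R.filter q) (A.filter q) := by
    refine Finset.disjoint_left.2 fun e he he' => ?_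
    have heA : e ∈ A := (Finset.mem_filter.1 he').1
    have heE : e ∈ E := (Finset.mem_filter.1 (Finset.mem_sdiff.1 he).1).1
    exact (Finset.disjoint_left.1 hA heA heE).elim
  rw [hsd, Finset.card_union_of_disjoint hdisj,
    Finset.card_sdiff_of_subset (Finset.filter_subset_filter q hR)]

/-- The exceptional well-formedness predicate: phylo + semibinary + treechild,
except that vertices in `D` are degree-(1,1). -/
structure Exc (M : Network X) (D : Finset ℕ) : Prop where
  root_mem : M.root ∈ M.V
  root_in : M.indeg M.root = 0
  root_out : M.outdeg M.root = 1
  edge_mem : ∀ e ∈ M.E, e.1 ∈ M.V ∧ e.2 ∈ M.V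
  inj : Set.InjOn M.label ↑M.taxa
  taxa_leaf : ∀ x ∈ M.taxa, M.label x ∈ M.V ∧ M.IsLeafNode (M.label x)
  leaf_taxa : ∀ v ∈ M.V, M.IsLeafNode v → ∃ x ∈ M.taxa, M.label x = v
  classify : ∀ v ∈ M.V, v = M.root ∨ v ∈ D ∨ M.IsLeafNode v ∨ M.IsTreeNode v ∨ M.IsRetic v
  acyclic : ∀ v : ℕ, ¬ Relation.TransGen (fun a b => (a, b) ∈ M.E) v v
  excD : ∀ v ∈ D, v ∈ M.V ∧ M.indeg v = 1 ∧ M.outdeg v = 1 ∧ v ≠ M.root ∧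
    ∀ x ∈ M.taxa, M.label x ≠ v
  sb : ∀ v ∈ M.V, M.IsTreeNode v → M.outdeg v = 2
  sf : M.StackFree
  tc : ∀ v ∈ M.V, M.IsTreeNode v → ∃ c ∈ M.children v, M.IsTreeNode c ∨ M.IsLeafNode c ∨ c ∈ D

lemma exc_empty_iff (M : Network X) :
    Exc M ∅ ↔ M.IsPhylo ∧ M.SemiBinary ∧ M.IsTreeChild := by
  constructor
  · intro h
    refine ⟨⟨h.root_mem, h.root_in, h.root_out, h.edge_mem, h.inj, h.taxa_leaf, h.leaf_taxa,
      ?_, h.acyclic⟩, h.sb, h.sf, ?_⟩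
    · intro v hv
      rcases h.classify v hv with h' | h' | h' | h' | h'
      · exact Or.inl h'
      · simp at h'
      · exact Or.inr (Or.inl h')
      · exact Or.inr (Or.inr (Or.inl h'))
      · exact Or.inr (Or.inr (Or.inr h'))
    · intro v hv ht
      obtain ⟨c, hc, h'⟩ := h.tc v hv ht
      refine ⟨c, hc, ?_⟩
      rcases h' with h' | h' | h'
      · exact Or.inl h'
      · exact Or.inr h'
      · simp at h'
  · rintro ⟨⟨h1, h2, h3, h4, h5, h6, h7, h8, h9⟩, hsb, hsf, htc⟩
    refine ⟨h1, h2, h3, h4, h5, h6, h7, ?_, h9, by simp, hsb, hsf, ?_⟩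
    · intro v hv
      rcases h8 v hv with h' | h'
      · exact Or.inl h'
      · exact Or.inr (Or.inr h')
    · intro v hv ht
      obtain ⟨c, hc, h'⟩ := htc v hv ht
      exact ⟨c, hc, by tauto⟩

/-- Main lemma on `suppress`. -/
lemma supp {M : Network X} {D : Finset ℕ} (h : Exc M D) {v pv cv : ℕ} (hv : v ∈ D)
    (hpv : (pv, v) ∈ M.E) (hcv : (v, cv) ∈ M.E) (hcleaf : M.IsLeafNode cv) :
    (M.suppress v).V = M.V.erase v ∧ (M.suppress v).taxa = M.taxa ∧
    (M.suppress v).root = M.root ∧ (M.suppress v).label = M.label ∧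
    (∀ e, e ∈ (M.suppress v).E ↔ ((e ∈ M.E ∧ e.1 ≠ v ∧ e.2 ≠ v) ∨ e = (pv, cv))) ∧
    (∀ w, w ≠ v → (M.suppress v).indeg w = M.indeg w ∧ (M.suppress v).outdeg w = M.outdeg w) ∧
    Exc (M.suppress v) (D.erase v) := by
  classical
  obtain ⟨hvV, hdin, hdout, hvroot, hvlab⟩ := h.excD v hv
  obtain ⟨p₀, hp₀, hp₀u⟩ := M.exists_unique_parent hdin
  obtain ⟨c₀, hc₀, hc₀u⟩ := M.exists_unique_child hdout
  have hpveq : ∀ w, (w, v) ∈ M.E → w = pv := by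
    intro w hw; rw [hp₀u w hw, ← hp₀u pv hpv]
  have hcveq : ∀ w, (v, w) ∈ M.E → w = cv := by
    intro w hw; rw [hc₀u w hw, ← hc₀u cv hcv]
  have hpvv : pv ≠ v := fun hh => M.no_self_loop h.acyclic (hh ▸ hpv)
  have hcvv : cv ≠ v := fun hh => M.no_self_loop h.acyclic (hh ▸ hcv)
  have hcvparent : ∀ w, (w, cv) ∈ M.E → w = v := by
    obtain ⟨p₁, hp₁, hp₁u⟩ := M.exists_unique_parent hcleaf.1
    intro w hw; rw [hp₁u w hw, ← hp₁u v hcv]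
  have hnew_not_mem : (pv, cv) ∉ M.E := fun hh => hpvv (hcvparent pv hh)
  have hif : M.indeg v = 1 ∧ M.outdeg v = 1 := ⟨hdin, hdout⟩
  have hsupp : M.suppress v =
      { V := M.V.erase v,
        E := (M.E.filter (fun e => e.1 ≠ v ∧ e.2 ≠ v)) ∪ (M.parents v ×ˢ M.children v),
        root := M.root, taxa := M.taxa, label := M.label } := by
    rw [suppress, if_pos hif]
  have hpar : M.parents v = {pv} := M.parents_eq_singleton hpv hpveq
  have hchild : M.children v = {cv} := M.children_eq_singleton hcv hcveq
  have hV : (M.suppress v).V = M.V.erase v := by rw [hsupp]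
  have htaxa : (M.suppress v).taxa = M.taxa := by rw [hsupp]
  have hroot : (M.suppress v).root = M.root := by rw [hsupp]
  have hlabel : (M.suppress v).label = M.label := by rw [hsupp]
  have hEchar : ∀ e, e ∈ (M.suppress v).E ↔
      ((e ∈ M.E ∧ e.1 ≠ v ∧ e.2 ≠ v) ∨ e = (pv, cv)) := by
    intro e
    rw [hsupp]
    simp only [Finset.mem_union, Finset.mem_filter, hpar, hchild,
      Finset.singleton_product_singleton, Finset.mem_singleton]
  have hEeq : (M.suppress v).E = (M.E \ {(pv, v), (v, cv)}) ∪ {(pv, cv)} := by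
    ext e
    rw [hEchar e]
    simp only [Finset.mem_union, Finset.mem_sdiff, Finset.mem_insert, Finset.mem_singleton]
    constructor
    · rintro (⟨he, h1, h2⟩ | he)
      · refine Or.inl ⟨he, ?_⟩
        rintro (rfl | rfl)
        · exact h2 rfl
        · exact h1 rfl
      · exact Or.inr he
    · rintro (⟨he, hne⟩ | he)
      · push_neg at hne
        refine Or.inl ⟨he, fun hh => ?_, fun hh => ?_⟩
        · exact hne.2 (Prod.ext hh (hcveq e.2 (by rw [← hh]; exact he)))
        · exact hne.1 (Prod.ext (hpveq e.1 (by rw [← hh]; exact he)) hh)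
      · exact Or.inr he
  have hRsub : ({(pv, v), (v, cv)} : Finset (ℕ × ℕ)) ⊆ M.E := by
    intro e he
    rcases Finset.mem_insert.1 he with hh | hh
    · rw [hh]; exact hpv
    · rw [Finset.mem_singleton.1 hh]; exact hcv
  have hAdis : Disjoint ({(pv, cv)} : Finset (ℕ × ℕ)) M.E := by
    simp [Finset.disjoint_left, hnew_not_mem]
  have hdeg : ∀ w, w ≠ v →
      (M.suppress v).indeg w = M.indeg w ∧ (M.suppress v).outdeg w = M.outdeg w := by
    intro w hw
    constructor
    · simp only [indeg]
      rw [deg_count M.E hEeq hRsub hAdis (fun e => e.2 = w)]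
      by_cases hwc : w = cv
      · have e1 : ({(pv, v), (v, cv)} : Finset (ℕ × ℕ)).filter (fun e => e.2 = w) = {(v, cv)} := by
          rw [Finset.filter_insert, if_neg (fun hh => hw (by exact hh.symm)),
            Finset.filter_singleton, if_pos (by exact hwc.symm)]
        have e2 : ({(pv, cv)} : Finset (ℕ × ℕ)).filter (fun e => e.2 = w) = {(pv, cv)} := by
          rw [Finset.filter_singleton, if_pos (by exact hwc.symm)]
        rw [e1, e2, Finset.card_singleton, Finset.card_singleton, hwc]
        have h1 := M.indeg_pos_of_mem hcv
        simp only [indeg] at h1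
        omega
      · have e1 : ({(pv, v), (v, cv)} : Finset (ℕ × ℕ)).filter (fun e => e.2 = w) = ∅ := by
          rw [Finset.filter_insert, if_neg (fun hh => hw (by exact hh.symm)),
            Finset.filter_singleton, if_neg (fun hh => hwc (by exact hh.symm))]
        have e2 : ({(pv, cv)} : Finset (ℕ × ℕ)).filter (fun e => e.2 = w) = ∅ := by
          rw [Finset.filter_singleton, if_neg (fun hh => hwc (by exact hh.symm))]
        rw [e1, e2]
        simp
    · simp only [outdeg]
      rw [deg_count M.E hEeq hRsub hAdis (fun e => e.1 = w)]
      by_cases hwp : w = pv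
      · have e1 : ({(pv, v), (v, cv)} : Finset (ℕ × ℕ)).filter (fun e => e.1 = w) = {(pv, v)} := by
          rw [Finset.filter_insert, if_pos (by exact hwp.symm),
            Finset.filter_singleton, if_neg (fun hh => hw (by exact hh.symm))]
          rfl
        have e2 : ({(pv, cv)} : Finset (ℕ × ℕ)).filter (fun e => e.1 = w) = {(pv, cv)} := by
          rw [Finset.filter_singleton, if_pos (by exact hwp.symm)]
        rw [e1, e2, Finset.card_singleton, Finset.card_singleton, hwp]
        have h1 := M.outdeg_pos_of_mem hpv
        simp only [outdeg] at h1
        omega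
      · have e1 : ({(pv, v), (v, cv)} : Finset (ℕ × ℕ)).filter (fun e => e.1 = w) = ∅ := by
          rw [Finset.filter_insert, if_neg (fun hh => hwp (by exact hh.symm)),
            Finset.filter_singleton, if_neg (fun hh => hw (by exact hh.symm))]
        have e2 : ({(pv, cv)} : Finset (ℕ × ℕ)).filter (fun e => e.1 = w) = ∅ := by
          rw [Finset.filter_singleton, if_neg (fun hh => hwp (by exact hh.symm))]
        rw [e1, e2]
        simp
  have hleaf' : ∀ w, w ≠ v → ((M.suppress v).IsLeafNode w ↔ M.IsLeafNode w) := by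
    intro w hw; unfold IsLeafNode; rw [(hdeg w hw).1, (hdeg w hw).2]
  have htree' : ∀ w, w ≠ v → ((M.suppress v).IsTreeNode w ↔ M.IsTreeNode w) := by
    intro w hw; unfold IsTreeNode; rw [(hdeg w hw).1, (hdeg w hw).2]
  have hretic' : ∀ w, w ≠ v → ((M.suppress v).IsRetic w ↔ M.IsRetic w) := by
    intro w hw; unfold IsRetic; rw [(hdeg w hw).1, (hdeg w hw).2]
  have hrootv : M.root ≠ v := fun hh => hvroot hh.symm
  refine ⟨hV, htaxa, hroot, hlabel, hEchar, hdeg, ?_⟩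
  constructor
  case root_mem => rw [hroot, hV]; exact Finset.mem_erase.2 ⟨hrootv, h.root_mem⟩
  case root_in => rw [hroot, (hdeg M.root hrootv).1]; exact h.root_in
  case root_out => rw [hroot, (hdeg M.root hrootv).2]; exact h.root_out
  case edge_mem =>
    intro e he
    rcases (hEchar e).1 he with ⟨he', h1, h2⟩ | he'
    · rw [hV]
      exact ⟨Finset.mem_erase.2 ⟨h1, (h.edge_mem e he').1⟩,
        Finset.mem_erase.2 ⟨h2, (h.edge_mem e he').2⟩⟩
    · rw [hV, he']
      exact ⟨Finset.mem_erase.2 ⟨hpvv, (h.edge_mem _ hpv).1⟩,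
        Finset.mem_erase.2 ⟨hcvv, (h.edge_mem _ hcv).2⟩⟩
  case inj => rw [htaxa, hlabel]; exact h.inj
  case taxa_leaf =>
    intro x hx
    rw [htaxa] at hx
    rw [hlabel, hV]
    exact ⟨Finset.mem_erase.2 ⟨hvlab x hx, (h.taxa_leaf x hx).1⟩,
      (hleaf' _ (hvlab x hx)).2 (h.taxa_leaf x hx).2⟩
  case leaf_taxa =>
    intro w hw hl
    rw [hV] at hw
    obtain ⟨hwv, hwV⟩ := Finset.mem_erase.1 hw
    obtain ⟨x, hx, hxl⟩ := h.leaf_taxa w hwV ((hleaf' w hwv).1 hl)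
    rw [htaxa, hlabel]
    exact ⟨x, hx, hxl⟩
  case classify =>
    intro w hw
    rw [hV] at hw
    obtain ⟨hwv, hwV⟩ := Finset.mem_erase.1 hw
    rcases h.classify w hwV with h' | h' | h' | h' | h'
    · left; rw [hroot]; exact h'
    · right; left; exact Finset.mem_erase.2 ⟨hwv, h'⟩
    · right; right; left; exact (hleaf' w hwv).2 h'
    · right; right; right; left; exact (htree' w hwv).2 h'
    · right; right; right; right; exact (hretic' w hwv).2 h'
  case acyclic =>
    apply acyclic_of_lift (r := fun a b => (a, b) ∈ M.E)
    · intro a b hab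
      rcases (hEchar (a, b)).1 hab with ⟨he, _, _⟩ | he
      · exact Relation.TransGen.single he
      · simp only [Prod.mk.injEq] at he
        obtain ⟨rfl, rfl⟩ := he
        exact Relation.TransGen.head hpv (Relation.TransGen.single hcv)
    · exact h.acyclic
  case excD =>
    intro w hw
    obtain ⟨hwv, hwD⟩ := Finset.mem_erase.1 hw
    obtain ⟨m1, m2, m3, m4, m5⟩ := h.excD w hwD
    refine ⟨by rw [hV]; exact Finset.mem_erase.2 ⟨hwv, m1⟩, by rw [(hdeg w hwv).1]; exact m2,
      by rw [(hdeg w hwv).2]; exact m3, by rw [hroot]; exact m4, ?_⟩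
    rw [htaxa, hlabel]
    exact m5
  case sb =>
    intro w hw ht
    rw [hV] at hw
    obtain ⟨hwv, hwV⟩ := Finset.mem_erase.1 hw
    rw [(hdeg w hwv).2]
    exact h.sb w hwV ((htree' w hwv).1 ht)
  case sf =>
    intro e he
    rcases (hEchar e).1 he with ⟨he', h1, h2⟩ | he'
    · rintro ⟨hr1, hr2⟩
      exact h.sf e he' ⟨(hretic' e.1 h1).1 hr1, (hretic' e.2 h2).1 hr2⟩
    · rintro ⟨hr1, hr2⟩
      rw [he'] at hr2
      have : M.IsRetic cv := (hretic' cv hcvv).1 hr2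
      rw [IsRetic] at this
      rw [IsLeafNode] at hcleaf
      omega
  case tc =>
    intro w hw ht
    rw [hV] at hw
    obtain ⟨hwv, hwV⟩ := Finset.mem_erase.1 hw
    obtain ⟨c, hcmem, hcs⟩ := h.tc w hwV ((htree' w hwv).1 ht)
    have hcE := (M.mem_children_iff).1 hcmem
    by_cases hc : c = v
    · have hcE' : (w, v) ∈ M.E := by rw [← hc]; exact hcE
      have hwpv : w = pv := hpveq w hcE'
      refine ⟨cv, (M.suppress v).mem_children_iff.2 ((hEchar (w, cv)).2 (Or.inr (by rw [hwpv]))),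
        Or.inr (Or.inl ((hleaf' cv hcvv).2 hcleaf))⟩
    · refine ⟨c, (M.suppress v).mem_children_iff.2 ((hEchar (w, c)).2 (Or.inl ⟨hcE, hwv, hc⟩)), ?_⟩
      rcases hcs with h' | h' | h'
      · exact Or.inl ((htree' c hc).2 h')
      · exact Or.inr (Or.inl ((hleaf' c hc).2 h'))
      · exact Or.inr (Or.inr (Finset.mem_erase.2 ⟨hc, h'⟩))

end Network

end Aux2

section Aux3

namespace Network

variable {X : Type}

/-- The forbidden-set invariant: for every forbidden taxon still present whose
parent is a tree node, the siblings are neither reticulations nor leaves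
labelled by forbidden taxa. -/
def Phi (M : Network X) (F : Set X) : Prop :=
  ∀ x ∈ F, x ∈ M.taxa → ∀ p c, (p, M.label x) ∈ M.E → M.IsTreeNode p →
    (p, c) ∈ M.E → c ≠ M.label x →
    ¬ M.IsRetic c ∧ ∀ y ∈ F, y ∈ M.taxa → M.label y ≠ c

lemma exists_two_parents (M : Network X) {v : ℕ} (h : M.indeg v = 2) :
    ∃ p₁ p₂, p₁ ≠ p₂ ∧ (p₁, v) ∈ M.E ∧ (p₂, v) ∈ M.E ∧
      ∀ w, (w, v) ∈ M.E → w = p₁ ∨ w = p₂ := by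
  obtain ⟨e₁, e₂, hne, he⟩ := Finset.card_eq_two.1 h
  have h1 : e₁ ∈ M.E.filter (fun e => e.2 = v) := by rw [he]; simp
  have h2 : e₂ ∈ M.E.filter (fun e => e.2 = v) := by rw [he]; simp
  obtain ⟨h1E, h1v⟩ := Finset.mem_filter.1 h1
  obtain ⟨h2E, h2v⟩ := Finset.mem_filter.1 h2
  refine ⟨e₁.1, e₂.1, ?_, ?_, ?_, ?_⟩
  · intro hc; apply hne; apply Prod.ext hc (by rw [h1v, h2v])
  · rwa [show (e₁.1, v) = e₁ by rw [← h1v]]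
  · rwa [show (e₂.1, v) = e₂ by rw [← h2v]]
  · intro w hw
    have : (w, v) ∈ M.E.filter (fun e => e.2 = v) := Finset.mem_filter.2 ⟨hw, rfl⟩
    rw [he, Finset.mem_insert, Finset.mem_singleton] at this
    rcases this with h' | h'
    · left; rw [← h']
    · right; rw [← h']

lemma cherry_step {M : Network X} (h : Exc M ∅) {a b : X} (hab : M.IsCherry a b) :
    Exc (M.reducePair (a, b)) ∅ ∧
    (M.reducePair (a, b)).label = M.label ∧
    (M.reducePair (a, b)).taxa = M.taxa.erase a ∧
    (M.reducePair (a, b)).V.card < M.V.card ∧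
    ∀ F : Set X, b ∉ F → Phi M F → Phi (M.reducePair (a, b)) (insert a F) := by
  classical
  obtain ⟨haT, hbT, hne, p, hpa, hpb⟩ := id hab
  set ℓa := M.label a with hℓa
  set ℓb := M.label b with hℓb
  have hla_leaf : M.IsLeafNode ℓa := (h.taxa_leaf a haT).2
  have hlb_leaf : M.IsLeafNode ℓb := (h.taxa_leaf b hbT).2
  have hlaV : ℓa ∈ M.V := (h.taxa_leaf a haT).1
  have hlane : ℓa ≠ ℓb := fun hh => hne (h.inj (Finset.mem_coe.2 haT) (Finset.mem_coe.2 hbT) hh)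
  -- p is a tree node with outdegree 2 and children exactly ℓa, ℓb
  have houtp2 : 2 ≤ M.outdeg p := by
    have hsub : ({(p, ℓa), (p, ℓb)} : Finset (ℕ × ℕ)) ⊆ M.E.filter (fun e => e.1 = p) := by
      intro e he
      rcases Finset.mem_insert.1 he with rfl | he
      · exact Finset.mem_filter.2 ⟨hpa, rfl⟩
      · rw [Finset.mem_singleton.1 he]; exact Finset.mem_filter.2 ⟨hpb, rfl⟩
    have hcard : ({(p, ℓa), (p, ℓb)} : Finset (ℕ × ℕ)).card = 2 := by
      rw [Finset.card_insert_of_notMem (by simp [hlane]), Finset.card_singleton]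
    calc 2 = _ := hcard.symm
    _ ≤ _ := Finset.card_le_card hsub
  have hpV : p ∈ M.V := (h.edge_mem _ hpa).1
  have hproot : p ≠ M.root := by
    intro hh
    rw [hh] at houtp2
    rw [h.root_out] at houtp2
    omega
  have htreep : M.IsTreeNode p := by
    rcases h.classify p hpV with h' | h' | h' | h' | h'
    · exact absurd h' hproot
    · simp at h'
    · exfalso; obtain ⟨_, h2⟩ := h'; omega
    · exact h'
    · exfalso; obtain ⟨_, h2⟩ := h'; omega
  have houtp : M.outdeg p = 2 := h.sb p hpV htreep
  have hpla : p ≠ ℓa := by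
    intro hh
    have := hla_leaf.2
    rw [← hh] at this
    omega
  have hplb : p ≠ ℓb := by
    intro hh
    have := hlb_leaf.2
    rw [← hh] at this
    omega
  have henum : ∀ w, (p, w) ∈ M.E → w = ℓa ∨ w = ℓb := by
    obtain ⟨c₁, c₂, h12, hc1, hc2, he⟩ := M.exists_two_children houtp
    intro w hw
    rcases he ℓa hpa with ha1 | ha1 <;> rcases he ℓb hpb with hb1 | hb1 <;>
      rcases he w hw with h' | h'
    · exact absurd (ha1.trans hb1.symm) hlane
    · exact absurd (ha1.trans hb1.symm) hlane
    · exact Or.inl (h'.trans ha1.symm)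
    · exact Or.inr (h'.trans hb1.symm)
    · exact Or.inr (h'.trans hb1.symm)
    · exact Or.inl (h'.trans ha1.symm)
    · exact absurd (ha1.trans hb1.symm) hlane
    · exact absurd (ha1.trans hb1.symm) hlane
  obtain ⟨q, hqp, hqu⟩ := M.exists_unique_parent htreep.1
  have hparent_a : ∀ w, (w, ℓa) ∈ M.E → w = p := by
    obtain ⟨p₁, hp₁, hp₁u⟩ := M.exists_unique_parent hla_leaf.1
    intro w hw; rw [hp₁u w hw, ← hp₁u p hpa]
  have hparent_b : ∀ w, (w, ℓb) ∈ M.E → w = p := by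
    obtain ⟨p₁, hp₁, hp₁u⟩ := M.exists_unique_parent hlb_leaf.1
    intro w hw; rw [hp₁u w hw, ← hp₁u p hpb]
  have htp : M.theParent ℓa = p := M.theParent_eq hpa hparent_a
  set M₁ : Network X :=
    { V := M.V.erase ℓa,
      E := M.E.filter (fun e => e.1 ≠ ℓa ∧ e.2 ≠ ℓa),
      root := M.root, taxa := M.taxa.erase a, label := M.label } with hM₁
  have hred_eq : M.reducePair (a, b) = M₁.suppress p := by
    rw [show M.reducePair (a, b) = (if M.IsCherry a b then
      suppress
        { V := M.V.erase (M.label a),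
          E := M.E.filter (fun e => e.1 ≠ M.label a ∧ e.2 ≠ M.label a),
          root := M.root, taxa := M.taxa.erase a, label := M.label }
        (M.theParent (M.label a))
      else if M.IsRetCherry a b then
        (((M.delEdge (M.theParent (M.label b), M.theParent (M.label a))).suppress
            (M.theParent (M.label b))).suppress (M.theParent (M.label a)))
      else M) from rfl, if_pos hab, htp]
  -- M₁ facts
  have hM1E : M₁.E = (M.E \ {(p, ℓa)}) ∪ (∅ : Finset (ℕ × ℕ)) := by
    rw [Finset.union_empty]
    ext e
    simp only [hM₁, Finset.mem_filter, Finset.mem_sdiff, Finset.mem_singleton]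
    constructor
    · rintro ⟨he, h1, h2⟩
      refine ⟨he, ?_⟩
      rintro rfl
      exact h2 rfl
    · rintro ⟨he, hne'⟩
      refine ⟨he, fun hh => ?_, fun hh => ?_⟩
      · exact M.not_mem_of_outdeg_zero hla_leaf.2 (show (ℓa, e.2) ∈ M.E by rw [← hh]; exact he)
      · exact hne' (Prod.ext (hparent_a e.1 (by rw [← hh]; exact he)) hh)
  have hRsub : ({(p, ℓa)} : Finset (ℕ × ℕ)) ⊆ M.E := by
    intro e he; rw [Finset.mem_singleton.1 he]; exact hpa
  have hAdis : Disjoint (∅ : Finset (ℕ × ℕ)) M.E := by simp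
  have dM1in : ∀ w, w ≠ ℓa → M₁.indeg w = M.indeg w := by
    intro w hw
    simp only [indeg]
    rw [deg_count M.E hM1E hRsub hAdis (fun e => e.2 = w)]
    rw [Finset.filter_singleton, if_neg (fun hh => hw (by exact hh.symm))]
    simp
  have dM1out : ∀ w, w ≠ p → M₁.outdeg w = M.outdeg w := by
    intro w hw
    simp only [outdeg]
    rw [deg_count M.E hM1E hRsub hAdis (fun e => e.1 = w)]
    rw [Finset.filter_singleton, if_neg (fun hh => hw (by exact hh.symm))]
    simp
  have dM1outp : M₁.outdeg p = 1 := by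
    simp only [outdeg]
    rw [deg_count M.E hM1E hRsub hAdis (fun e => e.1 = p)]
    rw [Finset.filter_singleton, if_pos rfl]
    have : (M.E.filter (fun e => e.1 = p)).card = 2 := houtp
    simp [this]
  have hM1mem : ∀ e, e ∈ M₁.E ↔ (e ∈ M.E ∧ e.1 ≠ ℓa ∧ e.2 ≠ ℓa) := by
    intro e; simp only [hM₁, Finset.mem_filter]
  have hExcM1 : Exc M₁ {p} := by
    constructor
    case root_mem =>
      refine Finset.mem_erase.2 ⟨?_, h.root_mem⟩
      intro hh
      have := hla_leaf.1
      rw [← hh] at this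
      rw [h.root_in] at this
      omega
    case root_in =>
      rw [dM1in M.root ?_]
      · exact h.root_in
      · intro hh
        have := hla_leaf.1
        rw [← hh, h.root_in] at this
        omega
    case root_out => rw [dM1out M.root (Ne.symm hproot)]; exact h.root_out
    case edge_mem =>
      intro e he
      obtain ⟨he', h1, h2⟩ := (hM1mem e).1 he
      exact ⟨Finset.mem_erase.2 ⟨h1, (h.edge_mem e he').1⟩,
        Finset.mem_erase.2 ⟨h2, (h.edge_mem e he').2⟩⟩
    case inj =>
      intro z hz w hw hzw
      exact h.inj (Finset.mem_coe.2 (Finset.mem_of_mem_erase (Finset.mem_coe.1 hz)))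
        (Finset.mem_coe.2 (Finset.mem_of_mem_erase (Finset.mem_coe.1 hw))) hzw
    case taxa_leaf =>
      intro x hx
      obtain ⟨hxa, hxT⟩ := Finset.mem_erase.1 hx
      have hlx : M.label x ≠ ℓa := fun hh => hxa (h.inj (Finset.mem_coe.2 hxT)
        (Finset.mem_coe.2 haT) hh)
      have hlxp : M.label x ≠ p := by
        intro hh
        have := (h.taxa_leaf x hxT).2.2
        rw [hh] at this
        omega
      refine ⟨Finset.mem_erase.2 ⟨hlx, (h.taxa_leaf x hxT).1⟩, ?_, ?_⟩
      · rw [dM1in _ hlx]; exact (h.taxa_leaf x hxT).2.1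
      · rw [dM1out _ hlxp]; exact (h.taxa_leaf x hxT).2.2
    case leaf_taxa =>
      intro w hw hl
      obtain ⟨hwa, hwV⟩ := Finset.mem_erase.1 hw
      have hwp : w ≠ p := by
        intro hh
        have := hl.2
        rw [hh, dM1outp] at this
        omega
      have hlw : M.IsLeafNode w := ⟨by rw [← dM1in w hwa]; exact hl.1,
        by rw [← dM1out w hwp]; exact hl.2⟩
      obtain ⟨x, hx, hxl⟩ := h.leaf_taxa w hwV hlw
      refine ⟨x, Finset.mem_erase.2 ⟨?_, hx⟩, hxl⟩
      rintro rfl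
      exact hwa (by rw [← hxl])
    case classify =>
      intro w hw
      obtain ⟨hwa, hwV⟩ := Finset.mem_erase.1 hw
      by_cases hwp : w = p
      · right; left; rw [hwp]; exact Finset.mem_singleton_self p
      · rcases h.classify w hwV with h' | h' | h' | h' | h'
        · exact Or.inl h'
        · simp at h'
        · right; right; left
          exact ⟨by rw [dM1in w hwa]; exact h'.1, by rw [dM1out w hwp]; exact h'.2⟩
        · right; right; right; left
          exact ⟨by rw [dM1in w hwa]; exact h'.1, by rw [dM1out w hwp]; exact h'.2⟩
        · right; right; right; right
          exact ⟨by rw [dM1in w hwa]; exact h'.1, by rw [dM1out w hwp]; exact h'.2⟩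
    case acyclic =>
      apply acyclic_of_lift (r := fun a b => (a, b) ∈ M.E)
      · intro u w huw
        exact Relation.TransGen.single ((hM1mem (u, w)).1 huw).1
      · exact h.acyclic
    case excD =>
      intro w hw
      rw [Finset.mem_singleton.1 hw]
      refine ⟨Finset.mem_erase.2 ⟨hpla, hpV⟩, by rw [dM1in p hpla]; exact htreep.1,
        dM1outp, hproot, ?_⟩
      intro x hx
      obtain ⟨hxa, hxT⟩ := Finset.mem_erase.1 hx
      intro hh
      have := (h.taxa_leaf x hxT).2.2
      rw [hh] at this
      omega
    case sb =>
      intro w hw ht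
      obtain ⟨hwa, hwV⟩ := Finset.mem_erase.1 hw
      have hwp : w ≠ p := by
        intro hh
        have := ht.2
        rw [hh, dM1outp] at this
        omega
      rw [dM1out w hwp]
      exact h.sb w hwV ⟨by rw [← dM1in w hwa]; exact ht.1, by rw [← dM1out w hwp]; exact ht.2⟩
    case sf =>
      intro e he
      obtain ⟨he', h1, h2⟩ := (hM1mem e).1 he
      rintro ⟨hr1, hr2⟩
      by_cases he1p : e.1 = p
      · rw [he1p] at hr1
        have := hr1.1
        rw [dM1in p hpla] at this
        have := htreep.1
        omega
      · by_cases he2p : e.2 = p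
        · rw [he2p] at hr2
          have := hr2.2
          rw [dM1outp] at this
          have h3 := hr2.1
          rw [dM1in p hpla] at h3
          have := htreep.1
          omega
        · exact h.sf e he' ⟨⟨by rw [← dM1in e.1 h1]; exact hr1.1,
            by rw [← dM1out e.1 he1p]; exact hr1.2⟩,
            ⟨by rw [← dM1in e.2 h2]; exact hr2.1, by rw [← dM1out e.2 he2p]; exact hr2.2⟩⟩
    case tc =>
      intro w hw ht
      obtain ⟨hwa, hwV⟩ := Finset.mem_erase.1 hw
      have hwp : w ≠ p := by
        intro hh
        have := ht.2
        rw [hh, dM1outp] at this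
        omega
      have htM : M.IsTreeNode w :=
        ⟨by rw [← dM1in w hwa]; exact ht.1, by rw [← dM1out w hwp]; exact ht.2⟩
      obtain ⟨c, hcmem, hcs⟩ := h.tc w hwV htM
      have hcE := (M.mem_children_iff).1 hcmem
      have hca : c ≠ ℓa := by
        intro hh
        exact hwp (hparent_a w (by rw [← hh]; exact hcE))
      have hcM1 : c ∈ M₁.children w :=
        (M₁.mem_children_iff).2 ((hM1mem (w, c)).2 ⟨hcE, hwa, hca⟩)
      by_cases hcp : c = p
      · exact ⟨c, hcM1, Or.inr (Or.inr (by rw [hcp]; exact Finset.mem_singleton_self p))⟩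
      · refine ⟨c, hcM1, ?_⟩
        rcases hcs with h' | h' | h'
        · exact Or.inl ⟨by rw [dM1in c hca]; exact h'.1, by rw [dM1out c hcp]; exact h'.2⟩
        · exact Or.inr (Or.inl ⟨by rw [dM1in c hca]; exact h'.1,
            by rw [dM1out c hcp]; exact h'.2⟩)
        · simp at h'
  -- apply supp
  have hqla : q ≠ ℓa := by
    intro hh
    exact M.not_mem_of_outdeg_zero hla_leaf.2 (show (ℓa, p) ∈ M.E by rw [← hh]; exact hqp)
  have hqpM1 : (q, p) ∈ M₁.E := (hM1mem (q, p)).2 ⟨hqp, hqla, hpla⟩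
  have hpbM1 : (p, ℓb) ∈ M₁.E := (hM1mem (p, ℓb)).2 ⟨hpb, hpla, Ne.symm hlane⟩
  have hlbp : ℓb ≠ p := fun hh => hpla (by
    have := hlb_leaf.2
    rw [hh] at this
    rw [houtp] at this
    omega)
  have hlbM1 : M₁.IsLeafNode ℓb :=
    ⟨by rw [dM1in ℓb (Ne.symm hlane)]; exact hlb_leaf.1,
     by rw [dM1out ℓb hlbp]; exact hlb_leaf.2⟩
  obtain ⟨sV, sTaxa, sRoot, sLabel, sEchar, sdeg, sExc⟩ :=
    supp hExcM1 (Finset.mem_singleton_self p) hqpM1 hpbM1 hlbM1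
  rw [Finset.erase_singleton] at sExc
  rw [hred_eq]
  have hM1taxa : M₁.taxa = M.taxa.erase a := rfl
  have hM1label : M₁.label = M.label := rfl
  have hM1V : M₁.V = M.V.erase ℓa := rfl
  refine ⟨sExc, by rw [sLabel], by rw [sTaxa], ?_, ?_⟩
  · rw [sV, hM1V]
    calc ((M.V.erase ℓa).erase p).card ≤ (M.V.erase ℓa).card := Finset.card_erase_le
    _ < M.V.card := Finset.card_erase_lt_of_mem hlaV
  · -- Phi preservation
    intro F hbF hPhi x hxF hxT p' c hpx htree hpc hcx
    set M' := M₁.suppress p with hM'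
    have hE' : ∀ e, e ∈ M'.E ↔
        ((e ∈ M.E ∧ e.1 ≠ ℓa ∧ e.2 ≠ ℓa ∧ e.1 ≠ p ∧ e.2 ≠ p) ∨ e = (q, ℓb)) := by
      intro e
      rw [sEchar e]
      constructor
      · rintro (⟨he, h1, h2⟩ | he)
        · obtain ⟨he', h3, h4⟩ := (hM1mem e).1 he
          exact Or.inl ⟨he', h3, h4, h1, h2⟩
        · exact Or.inr he
      · rintro (⟨he, h1, h2, h3, h4⟩ | he)
        · exact Or.inl ⟨(hM1mem e).2 ⟨he, h1, h2⟩, h3, h4⟩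
        · exact Or.inr he
    have hdeg' : ∀ w, w ≠ ℓa → w ≠ p →
        M'.indeg w = M.indeg w ∧ M'.outdeg w = M.outdeg w := by
      intro w h1 h2
      refine ⟨?_, ?_⟩
      · rw [(sdeg w h2).1, dM1in w h1]
      · rw [(sdeg w h2).2, dM1out w h2]
    have hlabel' : M'.label = M.label := by rw [sLabel]
    have htaxa' : M'.taxa = M.taxa.erase a := by rw [sTaxa]
    rw [htaxa'] at hxT
    obtain ⟨hxa, hxTM⟩ := Finset.mem_erase.1 hxT
    have hxF' : x ∈ F := by
      rcases hxF with rfl | hxF'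
      · exact absurd rfl hxa
      · exact hxF'
    rw [hlabel'] at hpx hcx ⊢
    have hlxla : M.label x ≠ ℓa := fun hh => hxa (h.inj (Finset.mem_coe.2 hxTM)
      (Finset.mem_coe.2 haT) hh)
    -- the parent edge cannot be the new edge unless x = b
    have hpxold : (p', M.label x) ∈ M.E ∧ p' ≠ ℓa ∧ p' ≠ p := by
      rcases (hE' (p', M.label x)).1 hpx with ⟨he, h1, h2, h3, h4⟩ | he
      · exact ⟨he, h1, h3⟩
      · exfalso
        have h1 : M.label x = ℓb := congrArg Prod.snd he
        have : x = b := h.inj (Finset.mem_coe.2 hxTM) (Finset.mem_coe.2 hbT) h1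
        rw [this] at hxF'
        exact hbF hxF'
    obtain ⟨hpxM, hp'la, hp'p⟩ := hpxold
    have htreeM : M.IsTreeNode p' :=
      ⟨by rw [← (hdeg' p' hp'la hp'p).1]; exact htree.1,
       by rw [← (hdeg' p' hp'la hp'p).2]; exact htree.2⟩
    rcases (hE' (p', c)).1 hpc with ⟨hce, hc1, hc2, hc3, hc4⟩ | hce
    · -- old sibling edge
      obtain ⟨hnr, hlab⟩ := hPhi x hxF' hxTM p' c hpxM htreeM hce hcx
      constructor
      · intro hr
        exact hnr ⟨by rw [← (hdeg' c hc2 hc4).1]; exact hr.1,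
          by rw [← (hdeg' c hc2 hc4).2]; exact hr.2⟩
      · intro y hy hyT
        rw [htaxa'] at hyT
        obtain ⟨hya, hyTM⟩ := Finset.mem_erase.1 hyT
        rcases hy with rfl | hy'
        · exact absurd rfl hya
        · exact hlab y hy' hyTM
    · -- new sibling edge (q, ℓb)
      have hcb : c = ℓb := congrArg Prod.snd hce
      constructor
      · intro hr
        have h0 : M'.outdeg c = 0 := by
          rw [hcb, (hdeg' ℓb (Ne.symm hlane) hlbp).2]
          exact hlb_leaf.2
        have := hr.2
        omega
      · intro y hy hyT
        rw [htaxa'] at hyT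
        obtain ⟨hya, hyTM⟩ := Finset.mem_erase.1 hyT
        rcases hy with rfl | hy'
        · exact absurd rfl hya
        · rw [hcb]
          intro hh
          have : y = b := h.inj (Finset.mem_coe.2 hyTM) (Finset.mem_coe.2 hbT) hh
          rw [this] at hy'
          exact hbF hy'

end Network

end Aux3

section Aux4

namespace Network

variable {X : Type}

lemma ret_step {M : Network X} (h : Exc M ∅) {a b : X} (hab : M.IsRetCherry a b) :
    Exc (M.reducePair (a, b)) ∅ ∧
    (M.reducePair (a, b)).label = M.label ∧
    (M.reducePair (a, b)).taxa = M.taxa ∧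
    (M.reducePair (a, b)).V.card < M.V.card ∧
    ∀ F : Set X, b ∉ F → Phi M F → Phi (M.reducePair (a, b)) (insert a F) := by
  classical
  obtain ⟨haT, hbT, hne, pa, pb, hpaa, hpbb, hretpa, htreepb, hpbpa⟩ := id hab
  set ℓa := M.label a with hℓa
  set ℓb := M.label b with hℓb
  have hla_leaf : M.IsLeafNode ℓa := (h.taxa_leaf a haT).2
  have hlb_leaf : M.IsLeafNode ℓb := (h.taxa_leaf b hbT).2
  have hlane : ℓa ≠ ℓb := fun hh => hne (h.inj (Finset.mem_coe.2 haT) (Finset.mem_coe.2 hbT) hh)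
  have hpaV : pa ∈ M.V := (h.edge_mem _ hpaa).1
  have hpbV : pb ∈ M.V := (h.edge_mem _ hpbb).1
  have hpapb : pa ≠ pb := by
    intro hh
    have h1 := hretpa.2
    have h2 := htreepb.2
    rw [hh] at h1
    omega
  have houtpb : M.outdeg pb = 2 := h.sb pb hpbV htreepb
  have hlapa : ℓa ≠ pa := by
    intro hh
    have := hla_leaf.2
    rw [hh] at this
    have := hretpa.2
    omega
  have hlapb : ℓa ≠ pb := by
    intro hh
    have := hla_leaf.2
    rw [hh, houtpb] at this
    omega
  have hlbpa : ℓb ≠ pa := by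
    intro hh
    have := hlb_leaf.2
    rw [hh] at this
    have := hretpa.2
    omega
  have hlbpb : ℓb ≠ pb := by
    intro hh
    have := hlb_leaf.2
    rw [hh, houtpb] at this
    omega
  have hparoot : pa ≠ M.root := by
    intro hh
    have := hretpa.1
    rw [hh, h.root_in] at this
    omega
  have hpbroot : pb ≠ M.root := by
    intro hh
    have := htreepb.1
    rw [hh, h.root_in] at this
    omega
  have hparent_a : ∀ w, (w, ℓa) ∈ M.E → w = pa := by
    obtain ⟨p₁, hp₁, hp₁u⟩ := M.exists_unique_parent hla_leaf.1
    intro w hw; rw [hp₁u w hw, ← hp₁u pa hpaa]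
  have hparent_b : ∀ w, (w, ℓb) ∈ M.E → w = pb := by
    obtain ⟨p₁, hp₁, hp₁u⟩ := M.exists_unique_parent hlb_leaf.1
    intro w hw; rw [hp₁u w hw, ← hp₁u pb hpbb]
  have hchild_pa : ∀ w, (pa, w) ∈ M.E → w = ℓa := by
    obtain ⟨c₁, hc₁, hc₁u⟩ := M.exists_unique_child hretpa.2
    intro w hw; rw [hc₁u w hw, ← hc₁u ℓa hpaa]
  have henum_pb : ∀ w, (pb, w) ∈ M.E → w = pa ∨ w = ℓb := by
    obtain ⟨c₁, c₂, h12, hc1, hc2, he⟩ := M.exists_two_children houtpb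
    intro w hw
    rcases he pa hpbpa with ha1 | ha1 <;> rcases he ℓb hpbb with hb1 | hb1 <;>
      rcases he w hw with h' | h'
    · exact absurd (ha1.trans hb1.symm) (Ne.symm hlbpa)
    · exact absurd (ha1.trans hb1.symm) (Ne.symm hlbpa)
    · exact Or.inl (h'.trans ha1.symm)
    · exact Or.inr (h'.trans hb1.symm)
    · exact Or.inr (h'.trans hb1.symm)
    · exact Or.inl (h'.trans ha1.symm)
    · exact absurd (ha1.trans hb1.symm) (Ne.symm hlbpa)
    · exact absurd (ha1.trans hb1.symm) (Ne.symm hlbpa)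
  obtain ⟨q, hqpb, hqu⟩ := M.exists_unique_parent htreepb.1
  have hqnepb : q ≠ pb := fun hh => M.no_self_loop h.acyclic (hh ▸ hqpb)
  have hqnepa : q ≠ pa := by
    intro hh
    have : pb = ℓa := hchild_pa pb (by rw [← hh]; exact hqpb)
    exact hlapb (this.symm)
  have htpa : M.theParent ℓa = pa := M.theParent_eq hpaa hparent_a
  have htpb : M.theParent ℓb = pb := M.theParent_eq hpbb hparent_b
  have hnotch : ¬ M.IsCherry a b := by
    rintro ⟨_, _, _, p, hpa', hpb'⟩
    have h1 : p = pa := hparent_a p hpa'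
    have h2 : p = pb := hparent_b p hpb'
    exact hpapb (h1.symm.trans h2)
  set K1 : Network X := M.delEdge (pb, pa) with hK1
  have hred_eq : M.reducePair (a, b) = (K1.suppress pb).suppress pa := by
    rw [show M.reducePair (a, b) = (if M.IsCherry a b then
      suppress
        { V := M.V.erase (M.label a),
          E := M.E.filter (fun e => e.1 ≠ M.label a ∧ e.2 ≠ M.label a),
          root := M.root, taxa := M.taxa.erase a, label := M.label }
        (M.theParent (M.label a))
      else if M.IsRetCherry a b then
        (((M.delEdge (M.theParent (M.label b), M.theParent (M.label a))).suppress
            (M.theParent (M.label b))).suppress (M.theParent (M.label a)))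
      else M) from rfl, if_neg hnotch, if_pos hab, htpa, htpb]
  -- K1 facts
  have hK1mem : ∀ e : ℕ × ℕ, e ∈ K1.E ↔ (e ∈ M.E ∧ e ≠ (pb, pa)) := by
    intro e
    simp only [hK1, delEdge, Finset.mem_erase]
    tauto
  have hK1V : K1.V = M.V := rfl
  have hK1taxa : K1.taxa = M.taxa := rfl
  have hK1label : K1.label = M.label := rfl
  have hK1root : K1.root = M.root := rfl
  have hK1E : K1.E = (M.E \ {(pb, pa)}) ∪ (∅ : Finset (ℕ × ℕ)) := by
    rw [Finset.union_empty]
    ext e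
    rw [hK1mem e]
    simp only [Finset.mem_sdiff, Finset.mem_singleton]
  have hRsub : ({(pb, pa)} : Finset (ℕ × ℕ)) ⊆ M.E := by
    intro e he; rw [Finset.mem_singleton.1 he]; exact hpbpa
  have hAdis : Disjoint (∅ : Finset (ℕ × ℕ)) M.E := by simp
  have dK1in : ∀ w, w ≠ pa → K1.indeg w = M.indeg w := by
    intro w hw
    simp only [indeg]
    rw [deg_count M.E hK1E hRsub hAdis (fun e => e.2 = w)]
    rw [Finset.filter_singleton, if_neg (fun hh => hw (by exact hh.symm))]
    simp
  have dK1out : ∀ w, w ≠ pb → K1.outdeg w = M.outdeg w := by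
    intro w hw
    simp only [outdeg]
    rw [deg_count M.E hK1E hRsub hAdis (fun e => e.1 = w)]
    rw [Finset.filter_singleton, if_neg (fun hh => hw (by exact hh.symm))]
    simp
  have dK1inpa : K1.indeg pa = M.indeg pa - 1 := by
    simp only [indeg]
    rw [deg_count M.E hK1E hRsub hAdis (fun e => e.2 = pa)]
    rw [Finset.filter_singleton, if_pos rfl]
    simp
  have dK1outpb : K1.outdeg pb = 1 := by
    simp only [outdeg]
    rw [deg_count M.E hK1E hRsub hAdis (fun e => e.1 = pb)]
    rw [Finset.filter_singleton, if_pos rfl]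
    have : (M.E.filter (fun e => e.1 = pb)).card = 2 := houtpb
    simp [this]
  set D : Finset ℕ := if M.indeg pa = 2 then {pb, pa} else {pb} with hD
  have hpbD : pb ∈ D := by
    by_cases hbin : M.indeg pa = 2
    · rw [hD, if_pos hbin]; exact Finset.mem_insert_self pb {pa}
    · rw [hD, if_neg hbin]; exact Finset.mem_singleton_self pb
  have hExcK1 : Exc K1 D := by
    constructor
    case root_mem => rw [hK1root]; exact h.root_mem
    case root_in =>
      rw [hK1root, dK1in M.root (Ne.symm hparoot)]; exact h.root_in
    case root_out =>
      rw [hK1root, dK1out M.root (Ne.symm hpbroot)]; exact h.root_out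
    case edge_mem =>
      intro e he
      exact h.edge_mem e ((hK1mem e).1 he).1
    case inj => rw [hK1taxa, hK1label]; exact h.inj
    case taxa_leaf =>
      intro x hx
      rw [hK1taxa] at hx
      rw [hK1label, hK1V]
      have hlxpa : M.label x ≠ pa := by
        intro hh
        have := (h.taxa_leaf x hx).2.2
        rw [hh] at this
        have := hretpa.2
        omega
      have hlxpb : M.label x ≠ pb := by
        intro hh
        have := (h.taxa_leaf x hx).2.2
        rw [hh, houtpb] at this
        omega
      exact ⟨(h.taxa_leaf x hx).1, by rw [dK1in _ hlxpa]; exact (h.taxa_leaf x hx).2.1,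
        by rw [dK1out _ hlxpb]; exact (h.taxa_leaf x hx).2.2⟩
    case leaf_taxa =>
      intro w hw hl
      have hwpb : w ≠ pb := by
        intro hh
        have := hl.2
        rw [hh, dK1outpb] at this
        omega
      have hwpa : w ≠ pa := by
        intro hh
        have := hl.2
        rw [hh, dK1out pa hpapb] at this
        have := hretpa.2
        omega
      rw [hK1taxa, hK1label]
      rw [hK1V] at hw
      exact h.leaf_taxa w hw ⟨by rw [← dK1in w hwpa]; exact hl.1,
        by rw [← dK1out w hwpb]; exact hl.2⟩
    case classify =>
      intro w hw
      by_cases hwpb : w = pb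
      · right; left; rw [hwpb]; exact hpbD
      · by_cases hwpa : w = pa
        · by_cases hbin : M.indeg pa = 2
          · right; left; rw [hwpa, hD, if_pos hbin]
            exact Finset.mem_insert.2 (Or.inr (Finset.mem_singleton_self pa))
          · right; right; right; right
            have h2 := hretpa.1
            refine ⟨?_, by rw [hwpa, dK1out pa hpapb]; exact hretpa.2⟩
            rw [hwpa, dK1inpa]
            omega
        · rcases h.classify w hw with h' | h' | h' | h' | h'
          · exact Or.inl h'
          · simp at h'
          · exact Or.inr (Or.inr (Or.inl ⟨by rw [dK1in w hwpa]; exact h'.1,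
              by rw [dK1out w hwpb]; exact h'.2⟩))
          · exact Or.inr (Or.inr (Or.inr (Or.inl ⟨by rw [dK1in w hwpa]; exact h'.1,
              by rw [dK1out w hwpb]; exact h'.2⟩)))
          · exact Or.inr (Or.inr (Or.inr (Or.inr ⟨by rw [dK1in w hwpa]; exact h'.1,
              by rw [dK1out w hwpb]; exact h'.2⟩)))
    case acyclic =>
      apply acyclic_of_lift (r := fun a b => (a, b) ∈ M.E)
      · intro u w huw
        exact Relation.TransGen.single ((hK1mem (u, w)).1 huw).1
      · exact h.acyclic
    case excD =>
      intro w hw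
      have hcase : w = pb ∨ (M.indeg pa = 2 ∧ w = pa) := by
        by_cases hbin : M.indeg pa = 2
        · rw [hD, if_pos hbin] at hw
          rcases Finset.mem_insert.1 hw with hh | hh
          · exact Or.inl hh
          · exact Or.inr ⟨hbin, Finset.mem_singleton.1 hh⟩
        · rw [hD, if_neg hbin] at hw
          exact Or.inl (Finset.mem_singleton.1 hw)
      rcases hcase with rfl | ⟨hbin, rfl⟩
      · refine ⟨by rw [hK1V]; exact hpbV, by rw [dK1in w (Ne.symm hpapb)]; exact htreepb.1,
          dK1outpb, by rw [hK1root]; exact hpbroot, ?_⟩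
        intro x hx hh
        rw [hK1label] at hh
        rw [hK1taxa] at hx
        have := (h.taxa_leaf x hx).2.2
        rw [hh, houtpb] at this
        omega
      · refine ⟨by rw [hK1V]; exact hpaV, by rw [dK1inpa, hbin], by
          rw [dK1out w hpapb]; exact hretpa.2, by rw [hK1root]; exact hparoot, ?_⟩
        intro x hx hh
        rw [hK1label] at hh
        rw [hK1taxa] at hx
        have := (h.taxa_leaf x hx).2.2
        rw [hh] at this
        have := hretpa.2
        omega
    case sb =>
      intro w hw ht
      have hwpb : w ≠ pb := by
        intro hh
        have := ht.2
        rw [hh, dK1outpb] at this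
        omega
      have hwpa : w ≠ pa := by
        intro hh
        have := ht.2
        rw [hh, dK1out pa hpapb] at this
        have := hretpa.2
        omega
      rw [dK1out w hwpb]
      exact h.sb w hw ⟨by rw [← dK1in w hwpa]; exact ht.1, by rw [← dK1out w hwpb]; exact ht.2⟩
    case sf =>
      intro e he
      rintro ⟨hr1, hr2⟩
      have hretK1 : ∀ u, K1.IsRetic u → M.IsRetic u := by
        intro u hu
        by_cases hupb : u = pb
        · exfalso
          have := hu.1
          rw [hupb, dK1in pb (Ne.symm hpapb)] at this
          have := htreepb.1
          omega
        · by_cases hupa : u = pa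
          · subst hupa
            refine ⟨?_, ?_⟩
            · have h1 := hu.1
              rw [dK1inpa] at h1
              have h2 := hretpa.1
              omega
            · have h3 := hu.2
              rw [dK1out u hupb] at h3
              exact h3
          · exact ⟨by rw [← dK1in u hupa]; exact hu.1, by rw [← dK1out u hupb]; exact hu.2⟩
      exact h.sf e ((hK1mem e).1 he).1 ⟨hretK1 e.1 hr1, hretK1 e.2 hr2⟩
    case tc =>
      intro w hw ht
      have hwpb : w ≠ pb := by
        intro hh
        have := ht.2
        rw [hh, dK1outpb] at this
        omega
      have hwpa : w ≠ pa := by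
        intro hh
        have := ht.2
        rw [hh, dK1out pa hpapb] at this
        have := hretpa.2
        omega
      have htM : M.IsTreeNode w :=
        ⟨by rw [← dK1in w hwpa]; exact ht.1, by rw [← dK1out w hwpb]; exact ht.2⟩
      obtain ⟨c, hcmem, hcs⟩ := h.tc w hw htM
      have hcE := (M.mem_children_iff).1 hcmem
      have hcK1 : c ∈ K1.children w := by
        refine (K1.mem_children_iff).2 ((hK1mem (w, c)).2 ⟨hcE, ?_⟩)
        intro hh
        exact hwpb (congrArg Prod.fst hh)
      by_cases hcpb : c = pb
      · exact ⟨c, hcK1, Or.inr (Or.inr (by rw [hcpb]; exact hpbD))⟩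
      · have hcpa : c ≠ pa := by
          rintro rfl
          rcases hcs with h' | h' | h'
          · have := h'.2
            have := hretpa.2
            omega
          · have := h'.2
            have := hretpa.2
            omega
          · simp at h'
        refine ⟨c, hcK1, ?_⟩
        rcases hcs with h' | h' | h'
        · exact Or.inl ⟨by rw [dK1in c hcpa]; exact h'.1, by rw [dK1out c hcpb]; exact h'.2⟩
        · exact Or.inr (Or.inl ⟨by rw [dK1in c hcpa]; exact h'.1,
            by rw [dK1out c hcpb]; exact h'.2⟩)
        · simp at h'
  -- step 1: suppress pb
  have hqpbK1 : (q, pb) ∈ K1.E := by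
    refine (hK1mem (q, pb)).2 ⟨hqpb, ?_⟩
    intro hh
    exact hpapb (congrArg Prod.snd hh).symm
  have hpblbK1 : (pb, ℓb) ∈ K1.E := by
    refine (hK1mem (pb, ℓb)).2 ⟨hpbb, ?_⟩
    intro hh
    exact hlbpa (congrArg Prod.snd hh)
  have hlbK1 : K1.IsLeafNode ℓb :=
    ⟨by rw [dK1in ℓb hlbpa]; exact hlb_leaf.1, by rw [dK1out ℓb hlbpb]; exact hlb_leaf.2⟩
  obtain ⟨s1V, s1Taxa, s1Root, s1Label, s1E, s1deg, s1Exc⟩ :=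
    supp hExcK1 hpbD hqpbK1 hpblbK1 hlbK1
  set K2 := K1.suppress pb with hK2
  have hK2mem : ∀ e : ℕ × ℕ, e ∈ K2.E ↔
      ((e ∈ M.E ∧ e.1 ≠ pb ∧ e.2 ≠ pb) ∨ e = (q, ℓb)) := by
    intro e
    rw [s1E e]
    constructor
    · rintro (⟨he, h1, h2⟩ | he)
      · exact Or.inl ⟨((hK1mem e).1 he).1, h1, h2⟩
      · exact Or.inr he
    · rintro (⟨he, h1, h2⟩ | he)
      · refine Or.inl ⟨(hK1mem e).2 ⟨he, ?_⟩, h1, h2⟩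
        intro hh
        exact h1 (congrArg Prod.fst hh)
      · exact Or.inr he
  have hK2deg : ∀ w, w ≠ pb → w ≠ pa →
      K2.indeg w = M.indeg w ∧ K2.outdeg w = M.outdeg w := by
    intro w h1 h2
    exact ⟨((s1deg w h1).1).trans (dK1in w h2), ((s1deg w h1).2).trans (dK1out w h1)⟩
  have hK2taxa : K2.taxa = M.taxa := by rw [s1Taxa, hK1taxa]
  have hK2label : K2.label = M.label := by rw [s1Label, hK1label]
  have hK2inpa : K2.indeg pa = M.indeg pa - 1 := ((s1deg pa hpapb).1).trans dK1inpa
  have hK2outpa : K2.outdeg pa = M.outdeg pa := ((s1deg pa hpapb).2).trans (dK1out pa hpapb)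
  have hpbVM : pb ∈ M.V := hpbV
  by_cases hbin : M.indeg pa = 2
  · -- binary reticulation: pa is suppressed as well
    have hDval : D = {pb, pa} := by rw [hD, if_pos hbin]
    have hDe : D.erase pb = {pa} := by
      rw [hDval]
      exact Finset.erase_insert (by simp [Ne.symm hpapb])
    rw [hDe] at s1Exc
    obtain ⟨p₁, p₂, h12, he1, he2, hen⟩ := M.exists_two_parents hbin
    have hpzex : ∃ pz, pz ≠ pb ∧ (pz, pa) ∈ M.E ∧
        ∀ w, (w, pa) ∈ M.E → w = pb ∨ w = pz := by
      rcases hen pb hpbpa with h' | h'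
      · refine ⟨p₂, ?_, he2, ?_⟩
        · intro hh
          exact h12 (h'.symm.trans hh.symm)
        · intro w hw
          rcases hen w hw with h'' | h''
          · left; rw [h'', ← h']
          · right; exact h''
      · refine ⟨p₁, ?_, he1, ?_⟩
        · intro hh
          exact h12 (hh.trans h')
        · intro w hw
          rcases hen w hw with h'' | h''
          · right; exact h''
          · left; rw [h'', ← h']
    obtain ⟨pz, hpzpb, hpza, henum_pa⟩ := hpzex
    have hpzpa : pz ≠ pa := fun hh => M.no_self_loop h.acyclic (hh ▸ hpza)
    have hpzV : pz ∈ M.V := (h.edge_mem _ hpza).1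
    have hpzpaK2 : (pz, pa) ∈ K2.E := (hK2mem (pz, pa)).2 (Or.inl ⟨hpza, hpzpb, hpapb⟩)
    have hpalaK2 : (pa, ℓa) ∈ K2.E := (hK2mem (pa, ℓa)).2 (Or.inl ⟨hpaa, hpapb, hlapb⟩)
    have hlaK2 : K2.IsLeafNode ℓa :=
      ⟨by rw [(hK2deg ℓa hlapb hlapa).1]; exact hla_leaf.1,
       by rw [(hK2deg ℓa hlapb hlapa).2]; exact hla_leaf.2⟩
    obtain ⟨s2V, s2Taxa, s2Root, s2Label, s2E, s2deg, s2Exc⟩ :=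
      supp s1Exc (Finset.mem_singleton_self pa) hpzpaK2 hpalaK2 hlaK2
    rw [Finset.erase_singleton] at s2Exc
    have hE' : ∀ e : ℕ × ℕ, e ∈ (K2.suppress pa).E ↔
        ((e ∈ M.E ∧ e.1 ≠ pb ∧ e.2 ≠ pb ∧ e.1 ≠ pa ∧ e.2 ≠ pa) ∨
          e = (q, ℓb) ∨ e = (pz, ℓa)) := by
      intro e
      rw [s2E e]
      constructor
      · rintro (⟨he2, h1, h2⟩ | he)
        · rcases (hK2mem e).1 he2 with ⟨he, h3, h4⟩ | he
          · exact Or.inl ⟨he, h3, h4, h1, h2⟩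
          · exact Or.inr (Or.inl he)
        · exact Or.inr (Or.inr he)
      · rintro (⟨he, h1, h2, h3, h4⟩ | he | he)
        · exact Or.inl ⟨(hK2mem e).2 (Or.inl ⟨he, h1, h2⟩), h3, h4⟩
        · subst he
          exact Or.inl ⟨(hK2mem (q, ℓb)).2 (Or.inr rfl), hqnepa, hlbpa⟩
        · exact Or.inr he
    have hdeg' : ∀ w, w ≠ pb → w ≠ pa →
        (K2.suppress pa).indeg w = M.indeg w ∧ (K2.suppress pa).outdeg w = M.outdeg w := by
      intro w h1 h2
      exact ⟨((s2deg w h2).1).trans (hK2deg w h1 h2).1, ((s2deg w h2).2).trans (hK2deg w h1 h2).2⟩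
    have hT' : (K2.suppress pa).taxa = M.taxa := by rw [s2Taxa, hK2taxa]
    have hL' : (K2.suppress pa).label = M.label := by rw [s2Label, hK2label]
    rw [hred_eq]
    refine ⟨s2Exc, hL', hT', ?_, ?_⟩
    · rw [s2V, s1V, hK1V]
      calc ((M.V.erase pb).erase pa).card ≤ (M.V.erase pb).card := Finset.card_erase_le
      _ < M.V.card := Finset.card_erase_lt_of_mem hpbVM
    · -- Phi preservation, binary case
      intro F hbF hPhi x hxF hxT p' c hpx htree hpc hcx
      rw [hT'] at hxT
      rw [hL'] at hpx hcx
      rw [hL', hT']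
      rcases (hE' (p', M.label x)).1 hpx with ⟨hex, hx1, hx2, hx3, hx4⟩ | hx5 | hx5
      · -- parent edge is an original edge
        have hxa : x ≠ a := by
          rintro rfl
          exact hx3 (hparent_a p' hex)
        have hxF' : x ∈ F := by
          rcases hxF with rfl | h'
          · exact absurd rfl hxa
          · exact h'
        have htreeM : M.IsTreeNode p' :=
          ⟨by rw [← (hdeg' p' hx1 hx3).1]; exact htree.1,
           by rw [← (hdeg' p' hx1 hx3).2]; exact htree.2⟩
        rcases (hE' (p', c)).1 hpc with ⟨hce, c1, c2, c3, c4⟩ | hc5 | hc5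
        · obtain ⟨hnr, hlab⟩ := hPhi x hxF' hxT p' c hex htreeM hce hcx
          constructor
          · intro hr
            exact hnr ⟨by rw [← (hdeg' c c2 c4).1]; exact hr.1,
              by rw [← (hdeg' c c2 c4).2]; exact hr.2⟩
          · intro y hy hyT hh
            rcases hy with rfl | hy'
            · rw [← hh] at hce
              exact c3 (hparent_a p' hce)
            · exact hlab y hy' hyT hh
        · -- sibling is the new edge (q, ℓb)
          have hcb : c = ℓb := congrArg Prod.snd hc5
          constructor
          · intro hr
            have h0 : (K2.suppress pa).outdeg c = 0 := by
              rw [hcb, (hdeg' ℓb hlbpb hlbpa).2]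
              exact hlb_leaf.2
            have := hr.2
            omega
          · intro y hy hyT hh
            rw [hcb] at hh
            rcases hy with rfl | hy'
            · exact hlane hh
            · have : y = b := h.inj (Finset.mem_coe.2 hyT) (Finset.mem_coe.2 hbT) hh
              rw [this] at hy'
              exact absurd hy' hbF
        · -- sibling is the new edge (pz, ℓa): impossible by Phi at pa
          have hp'pz : p' = pz := congrArg Prod.fst hc5
          obtain ⟨hnrpa, _⟩ := hPhi x hxF' hxT p' pa hex htreeM
            (by rw [hp'pz]; exact hpza) (Ne.symm hx4)
          exact absurd hretpa hnrpa
      · -- parent edge is (q, ℓb): then x = b, contradiction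
        have hlxb : M.label x = ℓb := congrArg Prod.snd hx5
        have hxb : x = b := h.inj (Finset.mem_coe.2 hxT) (Finset.mem_coe.2 hbT) hlxb
        rcases hxF with rfl | hxF'
        · exact absurd hxb hne
        · rw [hxb] at hxF'
          exact absurd hxF' hbF
      · -- parent edge is (pz, ℓa): x = a
        have hp'pz : p' = pz := congrArg Prod.fst hx5
        have hlxa : M.label x = ℓa := congrArg Prod.snd hx5
        rw [hp'pz] at htree hpc
        have htreepz : M.IsTreeNode pz :=
          ⟨by rw [← (hdeg' pz hpzpb hpzpa).1]; exact htree.1,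
           by rw [← (hdeg' pz hpzpb hpzpa).2]; exact htree.2⟩
        have houtpz := h.sb pz hpzV htreepz
        rcases (hE' (pz, c)).1 hpc with ⟨hce, c1, c2, c3, c4⟩ | hc5 | hc5
        · -- original sibling edge (pz, c)
          have henum_pz : ∀ u, (pz, u) ∈ M.E → u = pa ∨ u = c := by
            obtain ⟨c₁, c₂, h12', hc1, hc2, he⟩ := M.exists_two_children houtpz
            intro u hu
            rcases he pa hpza with ha1 | ha1 <;> rcases he c hce with hb1 | hb1 <;>
              rcases he u hu with h' | h'
            · exact absurd (hb1.trans ha1.symm) c4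
            · exact absurd (hb1.trans ha1.symm) c4
            · exact Or.inl (h'.trans ha1.symm)
            · exact Or.inr (h'.trans hb1.symm)
            · exact Or.inr (h'.trans hb1.symm)
            · exact Or.inl (h'.trans ha1.symm)
            · exact absurd (hb1.trans ha1.symm) c4
            · exact absurd (hb1.trans ha1.symm) c4
          obtain ⟨wgt, hwmem, hws⟩ := h.tc pz hpzV htreepz
          have hws' : M.IsTreeNode wgt ∨ M.IsLeafNode wgt := by
            rcases hws with h' | h' | h'
            · exact Or.inl h'
            · exact Or.inr h'
            · simp at h'
          have hwc : wgt = c := by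
            rcases henum_pz wgt ((M.mem_children_iff).1 hwmem) with h' | h'
            · exfalso
              rcases hws' with h'' | h''
              · have := h''.2
                rw [h'] at this
                have := hretpa.2
                omega
              · have := h''.2
                rw [h'] at this
                have := hretpa.2
                omega
            · exact h'
          rw [hwc] at hws'
          have hncretic : ¬ M.IsRetic c := by
            rintro ⟨hr1, hr2⟩
            rcases hws' with h'' | h''
            · have := h''.2
              omega
            · have := h''.2
              omega
          constructor
          · intro hr
            exact hncretic ⟨by rw [← (hdeg' c c2 c4).1]; exact hr.1,
              by rw [← (hdeg' c c2 c4).2]; exact hr.2⟩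
          · intro y hy hyT hh
            rcases hy with rfl | hy'
            · rw [← hh] at hce
              exact hpzpa (hparent_a pz hce)
            · rw [← hh] at hce
              obtain ⟨hnrpa, _⟩ := hPhi y hy' hyT pz pa hce htreepz hpza
                (by rw [hh]; exact Ne.symm c4)
              exact absurd hretpa hnrpa
        · -- sibling is (q, ℓb)
          have hcb : c = ℓb := congrArg Prod.snd hc5
          constructor
          · intro hr
            have h0 : (K2.suppress pa).outdeg c = 0 := by
              rw [hcb, (hdeg' ℓb hlbpb hlbpa).2]
              exact hlb_leaf.2
            have := hr.2
            omega
          · intro y hy hyT hh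
            rw [hcb] at hh
            rcases hy with rfl | hy'
            · exact hlane hh
            · have : y = b := h.inj (Finset.mem_coe.2 hyT) (Finset.mem_coe.2 hbT) hh
              rw [this] at hy'
              exact absurd hy' hbF
        · -- sibling is (pz, ℓa) itself: contradicts c ≠ label x
          have : c = ℓa := congrArg Prod.snd hc5
          exact absurd (this.trans hlxa.symm) hcx
  · -- multi-parent reticulation: pa survives
    have hDe : D.erase pb = ∅ := by
      rw [hD, if_neg hbin]
      exact Finset.erase_singleton pb
    rw [hDe] at s1Exc
    have hbin3 : 3 ≤ M.indeg pa := by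
      have := hretpa.1
      omega
    have hnoop : K2.suppress pa = K2 := by
      rw [suppress, if_neg]
      rintro ⟨h1, _⟩
      rw [hK2inpa] at h1
      omega
    rw [hred_eq, hnoop]
    have hT' : K2.taxa = M.taxa := hK2taxa
    have hL' : K2.label = M.label := hK2label
    refine ⟨s1Exc, hL', hT', ?_, ?_⟩
    · rw [s1V, hK1V]
      exact Finset.card_erase_lt_of_mem hpbVM
    · intro F hbF hPhi x hxF hxT p' c hpx htree hpc hcx
      rw [hT'] at hxT
      rw [hL'] at hpx hcx
      rw [hL', hT']
      rcases (hK2mem (p', M.label x)).1 hpx with ⟨hex, hx1, hx2⟩ | hx5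
      · have hp'pa : p' ≠ pa := by
          rintro rfl
          have h1 := htree.1
          rw [hK2inpa] at h1
          omega
        have hxa : x ≠ a := by
          rintro rfl
          exact hp'pa (hparent_a p' hex)
        have hxF' : x ∈ F := by
          rcases hxF with rfl | h'
          · exact absurd rfl hxa
          · exact h'
        have htreeM : M.IsTreeNode p' :=
          ⟨by rw [← (hK2deg p' hx1 hp'pa).1]; exact htree.1,
           by rw [← (hK2deg p' hx1 hp'pa).2]; exact htree.2⟩
        rcases (hK2mem (p', c)).1 hpc with ⟨hce, d1, d2⟩ | hc5
        · by_cases hcpa : c = pa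
          · have hlxpa : pa ≠ M.label x := by
              intro hh
              have := (h.taxa_leaf x hxT).2.2
              rw [← hh] at this
              have := hretpa.2
              omega
            obtain ⟨hnrpa, _⟩ := hPhi x hxF' hxT p' pa hex htreeM (hcpa ▸ hce) hlxpa
            exact absurd hretpa hnrpa
          · obtain ⟨hnr, hlab⟩ := hPhi x hxF' hxT p' c hex htreeM hce hcx
            constructor
            · intro hr
              exact hnr ⟨by rw [← (hK2deg c d2 hcpa).1]; exact hr.1,
                by rw [← (hK2deg c d2 hcpa).2]; exact hr.2⟩
            · intro y hy hyT hh
              rcases hy with rfl | hy'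
              · rw [← hh] at hce
                exact hp'pa (hparent_a p' hce)
              · exact hlab y hy' hyT hh
        · have hcb : c = ℓb := congrArg Prod.snd hc5
          constructor
          · intro hr
            have h0 : K2.outdeg c = 0 := by
              rw [hcb, (hK2deg ℓb hlbpb hlbpa).2]
              exact hlb_leaf.2
            have := hr.2
            omega
          · intro y hy hyT hh
            rw [hcb] at hh
            rcases hy with rfl | hy'
            · exact hlane hh
            · have : y = b := h.inj (Finset.mem_coe.2 hyT) (Finset.mem_coe.2 hbT) hh
              rw [this] at hy'
              exact absurd hy' hbF
      · have hlxb : M.label x = ℓb := congrArg Prod.snd hx5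
        have hxb : x = b := h.inj (Finset.mem_coe.2 hxT) (Finset.mem_coe.2 hbT) hlxb
        rcases hxF with rfl | hxF'
        · exact absurd hxb hne
        · rw [hxb] at hxF'
          exact absurd hxF' hbF

end Network

end Aux4

section Aux5

namespace Network

variable {X : Type}

lemma step_all {M : Network X} (h : Exc M ∅) {a b : X} (hred : M.ReduciblePair a b) :
    Exc (M.reducePair (a, b)) ∅ ∧
    (M.reducePair (a, b)).label = M.label ∧
    ((M.reducePair (a, b)).taxa = M.taxa.erase a ∨ (M.reducePair (a, b)).taxa = M.taxa) ∧
    b ∈ (M.reducePair (a, b)).taxa ∧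
    (M.reducePair (a, b)).V.card < M.V.card ∧
    (∀ F : Set X, b ∉ F → Phi M F → Phi (M.reducePair (a, b)) (insert a F)) := by
  rcases hred with hc | hr
  · obtain ⟨h1, h2, h3, h4, h5⟩ := cherry_step h hc
    refine ⟨h1, h2, Or.inl h3, ?_, h4, h5⟩
    rw [h3]
    exact Finset.mem_erase.2 ⟨Ne.symm hc.2.2.1, hc.2.1⟩
  · obtain ⟨h1, h2, h3, h4, h5⟩ := ret_step h hr
    refine ⟨h1, h2, Or.inr h3, ?_, h4, h5⟩
    rw [h3]
    exact hr.2.1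

lemma reducible_of_change {M : Network X} (c : X × X) (hch : M.reducePair c ≠ M) :
    M.ReduciblePair c.1 c.2 := by
  by_contra hn
  rw [ReduciblePair] at hn
  push_neg at hn
  apply hch
  rw [show M.reducePair c = (if M.IsCherry c.1 c.2 then
    suppress
      { V := M.V.erase (M.label c.1),
        E := M.E.filter (fun e => e.1 ≠ M.label c.1 ∧ e.2 ≠ M.label c.1),
        root := M.root, taxa := M.taxa.erase c.1, label := M.label }
      (M.theParent (M.label c.1))
    else if M.IsRetCherry c.1 c.2 then
      (((M.delEdge (M.theParent (M.label c.2), M.theParent (M.label c.1))).suppress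
          (M.theParent (M.label c.2))).suppress (M.theParent (M.label c.1)))
    else M) from rfl, if_neg hn.1, if_neg hn.2]

lemma singleton_taxa {M : Network X} (h : Exc M ∅) (hs : M.IsSingleLeaf) :
    ∃ x ∈ M.taxa, M.taxa = {x} := by
  obtain ⟨x, hxT, hV, hE, hne⟩ := hs
  refine ⟨x, hxT, Finset.eq_singleton_iff_unique_mem.2 ⟨hxT, ?_⟩⟩
  intro y hyT
  have h1 : M.label y ∈ M.V := (h.taxa_leaf y hyT).1
  rw [hV] at h1
  rcases Finset.mem_insert.1 h1 with h2 | h2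
  · exfalso
    have h3 := (h.taxa_leaf y hyT).2.1
    rw [h2, h.root_in] at h3
    omega
  · exact h.inj (Finset.mem_coe.2 hyT) (Finset.mem_coe.2 hxT) (Finset.mem_singleton.1 h2)

lemma no_tree_single {M : Network X} (h : Exc M ∅)
    (hnt : ∀ v ∈ M.V, ¬ M.IsTreeNode v) : M.IsSingleLeaf := by
  classical
  obtain ⟨c0, hc0, hc0u⟩ := M.exists_unique_child h.root_out
  have hc0V : c0 ∈ M.V := (h.edge_mem _ hc0).2
  have hc0root : c0 ≠ M.root := fun hh => M.no_self_loop h.acyclic (hh ▸ hc0)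
  have hnoretic : ∀ v ∈ M.V, ¬ M.IsRetic v := by
    intro v hv hr
    have h2 : 1 < (M.E.filter (fun e => e.2 = v)).card := hr.1
    obtain ⟨e₁, he₁, e₂, he₂, hne⟩ := Finset.one_lt_card.1 h2
    obtain ⟨he₁E, he₁v⟩ := Finset.mem_filter.1 he₁
    obtain ⟨he₂E, he₂v⟩ := Finset.mem_filter.1 he₂
    have hroot : ∀ w, (w, v) ∈ M.E → w = M.root := by
      intro w hw
      have hwV : w ∈ M.V := (h.edge_mem _ hw).1
      rcases h.classify w hwV with h' | h' | h' | h' | h'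
      · exact h'
      · simp at h'
      · exfalso; exact M.not_mem_of_outdeg_zero h'.2 hw
      · exact absurd h' (hnt w hwV)
      · exfalso
        exact h.sf (w, v) hw ⟨h', hr⟩
    have h3 : e₁ = e₂ := by
      have hh1 : e₁.1 = M.root := hroot e₁.1 (by rw [show (e₁.1, v) = e₁ from Prod.ext rfl he₁v.symm]; exact he₁E)
      have hh2 : e₂.1 = M.root := hroot e₂.1 (by rw [show (e₂.1, v) = e₂ from Prod.ext rfl he₂v.symm]; exact he₂E)
      exact Prod.ext (hh1.trans hh2.symm) (he₁v.trans he₂v.symm)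
    exact hne h3
  have hleaf : ∀ v ∈ M.V, v ≠ M.root → M.IsLeafNode v := by
    intro v hv hvr
    rcases h.classify v hv with h' | h' | h' | h' | h'
    · exact absurd h' hvr
    · simp at h'
    · exact h'
    · exact absurd h' (hnt v hv)
    · exact absurd h' (hnoretic v hv)
  have hEeq : M.E = {(M.root, c0)} := by
    apply Finset.eq_singleton_iff_unique_mem.2
    refine ⟨hc0, ?_⟩
    intro e he
    have h1V : e.1 ∈ M.V := (h.edge_mem e he).1
    have h1root : e.1 = M.root := by
      by_contra hh
      exact M.not_mem_of_outdeg_zero (hleaf e.1 h1V hh).2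
        (by rw [show (e.1, e.2) = e from Prod.ext rfl rfl]; exact he)
    have h2 : e.2 = c0 := hc0u e.2 (by
      rw [show (M.root, e.2) = e from Prod.ext h1root.symm rfl]; exact he)
    exact Prod.ext h1root h2
  have hVeq : M.V = {M.root, c0} := by
    apply Finset.Subset.antisymm
    · intro v hv
      by_cases hvr : v = M.root
      · rw [hvr]; exact Finset.mem_insert_self _ _
      · have hlv := hleaf v hv hvr
        obtain ⟨p, hp, _⟩ := M.exists_unique_parent hlv.1
        rw [hEeq, Finset.mem_singleton] at hp
        have : v = c0 := congrArg Prod.snd hp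
        rw [this]
        exact Finset.mem_insert.2 (Or.inr (Finset.mem_singleton_self c0))
    · intro v hv
      rcases Finset.mem_insert.1 hv with rfl | hv'
      · exact h.root_mem
      · rw [Finset.mem_singleton.1 hv']; exact hc0V
  have hc0leaf : M.IsLeafNode c0 := hleaf c0 hc0V hc0root
  obtain ⟨x, hxT, hxl⟩ := h.leaf_taxa c0 hc0V hc0leaf
  exact ⟨x, hxT, by rw [hxl]; exact hVeq, by rw [hxl]; exact hEeq,
    by rw [hxl]; exact Ne.symm hc0root⟩

lemma exists_pair {M : Network X} (h : Exc M ∅) {F : Set X} (hPhi : Phi M F)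
    (hns : ¬ M.IsSingleLeaf) : ∃ a b, M.ReduciblePair a b ∧ b ∉ F := by
  classical
  have htn : ∃ t ∈ M.V, M.IsTreeNode t := by
    by_contra hh
    push_neg at hh
    exact hns (no_tree_single h hh)
  obtain ⟨t0, ht0V, ht0T⟩ := htn
  obtain ⟨t, htmem, htmax⟩ := exists_maximal_finset
    (Relation.TransGen (fun u v => (u, v) ∈ M.E))
    (fun _ _ _ hab hbc => Relation.TransGen.trans hab hbc) h.acyclic
    (M.V.filter (fun v => M.IsTreeNode v)) ⟨t0, Finset.mem_filter.2 ⟨ht0V, ht0T⟩⟩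
  obtain ⟨htV, htT⟩ := Finset.mem_filter.1 htmem
  have hmax' : ∀ w ∈ M.V, M.IsTreeNode w →
      ¬ Relation.TransGen (fun u v => (u, v) ∈ M.E) t w := by
    intro w hw hwt
    exact htmax w (Finset.mem_filter.2 ⟨hw, hwt⟩)
  have hclass : ∀ c, (t, c) ∈ M.E →
      M.IsLeafNode c ∨ (M.IsRetic c ∧ ∃ d, (c, d) ∈ M.E ∧ M.IsLeafNode d) := by
    intro c hc
    have hcV : c ∈ M.V := (h.edge_mem _ hc).2
    have hcroot : c ≠ M.root := by
      intro hh
      have := M.indeg_pos_of_mem hc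
      rw [hh, h.root_in] at this
      omega
    rcases h.classify c hcV with h' | h' | h' | h' | h'
    · exact absurd h' hcroot
    · simp at h'
    · exact Or.inl h'
    · exact absurd (Relation.TransGen.single hc) (hmax' c hcV h')
    · obtain ⟨d, hd, _⟩ := M.exists_unique_child h'.2
      have hdV : d ∈ M.V := (h.edge_mem _ hd).2
      have hdroot : d ≠ M.root := by
        intro hh
        have := M.indeg_pos_of_mem hd
        rw [hh, h.root_in] at this
        omega
      refine Or.inr ⟨h', d, hd, ?_⟩
      rcases h.classify d hdV with h'' | h'' | h'' | h'' | h''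
      · exact absurd h'' hdroot
      · simp at h''
      · exact h''
      · exact absurd (Relation.TransGen.head hc (Relation.TransGen.single hd))
          (hmax' d hdV h'')
      · exact absurd (h.sf (c, d) hd ⟨h', h''⟩) (fun hh => hh)
  -- tree-child witness: a leaf child wy of t
  obtain ⟨wy, hwymem, hwys⟩ := h.tc t htV htT
  have hwyE := (M.mem_children_iff).1 hwymem
  have hwyV : wy ∈ M.V := (h.edge_mem _ hwyE).2
  have hwyleaf : M.IsLeafNode wy := by
    rcases hwys with h' | h' | h'
    · exact absurd (Relation.TransGen.single hwyE) (hmax' wy hwyV h')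
    · exact h'
    · simp at h'
  obtain ⟨y, hyT, hylab⟩ := h.leaf_taxa wy hwyV hwyleaf
  -- the other child oc of t
  have hoc : ∃ oc, (t, oc) ∈ M.E ∧ oc ≠ wy := by
    obtain ⟨c₁, c₂, h12, hc1, hc2, hen⟩ := M.exists_two_children (h.sb t htV htT)
    rcases hen wy hwyE with h' | h'
    · exact ⟨c₂, hc2, fun hh => h12 (by rw [← h', ← hh])⟩
    · exact ⟨c₁, hc1, fun hh => h12 (by rw [← h', ← hh])⟩
  obtain ⟨oc, hocE, hocwy⟩ := hoc
  have hparwy : ∀ w, (w, wy) ∈ M.E → w = t := by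
    obtain ⟨p₁, hp₁, hp₁u⟩ := M.exists_unique_parent hwyleaf.1
    intro w hw; rw [hp₁u w hw, ← hp₁u t hwyE]
  rcases hclass oc hocE with hocleaf | ⟨hocret, d, hdE, hdleaf⟩
  · -- cherry case
    obtain ⟨x, hxT, hxlab⟩ := h.leaf_taxa oc ((h.edge_mem _ hocE).2) hocleaf
    have hxy : x ≠ y := by
      rintro rfl
      rw [hylab] at hxlab
      exact hocwy hxlab.symm
    have hcherry : M.IsCherry x y :=
      ⟨hxT, hyT, hxy, t, by rw [hxlab]; exact hocE, by rw [hylab]; exact hwyE⟩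
    by_cases hyF : y ∈ F
    · by_cases hxF : x ∈ F
      · exfalso
        obtain ⟨_, hlab⟩ := hPhi x hxF hxT t wy (by rw [hxlab]; exact hocE) htT hwyE
          (by rw [hxlab]; exact Ne.symm hocwy)
        exact hlab y hyF hyT hylab
      · exact ⟨y, x, Or.inl ⟨hyT, hxT, Ne.symm hxy, t, by rw [hylab]; exact hwyE,
          by rw [hxlab]; exact hocE⟩, hxF⟩
    · exact ⟨x, y, Or.inl hcherry, hyF⟩
  · -- reticulated cherry case
    obtain ⟨x, hxT, hxlab⟩ := h.leaf_taxa d ((h.edge_mem _ hdE).2) hdleaf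
    have hdwy : d ≠ wy := by
      intro hh
      have : oc = t := hparwy oc (by rw [← hh]; exact hdE)
      exact M.no_self_loop h.acyclic (this ▸ hocE)
    have hxy : x ≠ y := by
      rintro rfl
      rw [hylab] at hxlab
      exact hdwy hxlab.symm
    by_cases hyF : y ∈ F
    · exfalso
      obtain ⟨hnr, _⟩ := hPhi y hyF hyT t oc (by rw [hylab]; exact hwyE) htT hocE
        (by rw [hylab]; exact hocwy)
      exact hnr hocret
    · exact ⟨x, y, Or.inr ⟨hxT, hyT, hxy, oc, t, by rw [hxlab]; exact hdE,
        by rw [hylab]; exact hwyE, hocret, htT, hocE⟩, hyF⟩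

end Network

end Aux5

section Aux6

namespace Network

variable {X : Type}

lemma getLast?_cons_of_ne_nil {α : Type _} (x : α) {l : List α} (hl : l ≠ []) :
    (x :: l).getLast? = l.getLast? := by
  cases l with
  | nil => exact absurd rfl hl
  | cons y ys => simp [List.getLast?_cons_cons]

lemma aux_reduce : ∀ n : ℕ, ∀ M : Network X, M.V.card ≤ n → Exc M ∅ → ∀ F : Set X, Phi M F →
    ∃ T : List (X × X),
      Reduces T M ∧
      (∀ p ∈ T, p.1 ≠ p.2) ∧
      (∀ j (hj : j < T.length), (T.get ⟨j, hj⟩).2 ∉ F ∧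
        (T.get ⟨j, hj⟩).2 ∉ ((T.take j).map Prod.fst)) ∧
      (∀ j (hj : j < T.length), ((T.get ⟨j, hj⟩).2 ∈ (T.drop (j + 1)).map Prod.fst) ∨
        (∃ q, T.getLast? = some q ∧ (T.get ⟨j, hj⟩).2 = q.2)) ∧
      (∀ b ∈ M.taxa, b ∈ T.map Prod.fst ∨ (M.reduceSeq T).taxa = {b}) ∧
      (T ≠ [] → ∃ q, T.getLast? = some q ∧ (M.reduceSeq T).taxa = {q.2}) ∧
      (∀ k, k < T.length → M.reduceSeq (T.take (k + 1)) ≠ M.reduceSeq (T.take k)) := by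
  intro n
  induction n with
  | zero =>
    intro M hcard hExc F hPhi
    exfalso
    have := Finset.card_pos.2 ⟨M.root, hExc.root_mem⟩
    omega
  | succ n ih =>
    intro M hcard hExc F hPhi
    by_cases hs : M.IsSingleLeaf
    · refine ⟨[], hs, by simp, by simp, by simp, ?_, by simp, by simp⟩
      intro b hb
      obtain ⟨x, hxT, hxe⟩ := singleton_taxa hExc hs
      right
      have : b = x := by
        have := hxe ▸ hb
        exact Finset.mem_singleton.1 this
      rw [show (M.reduceSeq []).taxa = M.taxa from rfl, hxe, this]
    · obtain ⟨a, b, hred, hbF⟩ := exists_pair hExc hPhi hs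
      obtain ⟨hExc', hlab', htax', hbT', hcard', hPhi'⟩ := step_all hExc hred
      set M' := M.reducePair (a, b) with hM'
      have hfold : ∀ L : List (X × X), M.reduceSeq ((a, b) :: L) = M'.reduceSeq L :=
        fun L => rfl
      obtain ⟨T', A1, A2, A3, A4, A5, A6, A7⟩ :=
        ih M' (by omega) hExc' (insert a F) (hPhi' F hbF hPhi)
      have habne : a ≠ b := by
        rcases hred with hc | hr
        · exact hc.2.2.1
        · exact hr.2.2.1
      refine ⟨(a, b) :: T', ?_, ?_, ?_, ?_, ?_, ?_, ?_⟩
      · rw [Reduces, hfold]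
        exact A1
      · intro p hp
        rcases List.mem_cons.1 hp with rfl | hp'
        · exact habne
        · exact A2 p hp'
      · intro j hj
        match j, hj with
        | 0, hj => exact ⟨hbF, by simp⟩
        | (j' + 1), hj =>
          obtain ⟨B1, B2⟩ := A3 j' (by simpa using hj)
          refine ⟨fun hh => B1 (Set.mem_insert_of_mem a hh), ?_⟩
          intro hh
          rcases List.mem_cons.1 (by simpa using hh) with hh' | hh'
          · exact B1 (hh' ▸ Set.mem_insert a F)
          · exact B2 (by simpa using hh')
      · intro j hj
        match j, hj with
        | 0, hj =>
          rcases A5 b hbT' with hb1 | hb1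
          · left
            simpa using hb1
          · right
            cases T' with
            | nil =>
              refine ⟨(a, b), by simp, rfl⟩
            | cons c rest =>
              obtain ⟨qq, hq1, hq2⟩ := A6 (by simp)
              refine ⟨qq, by rw [getLast?_cons_of_ne_nil _ (by simp)]; exact hq1, ?_⟩
              have : ({b} : Finset X) = {qq.2} := by rw [← hb1, ← hq2]
              exact Finset.singleton_inj.1 this
        | (j' + 1), hj =>
          have hT'ne : T' ≠ [] := by
            intro hh
            rw [hh] at hj
            simp at hj
          rcases A4 j' (by simpa using hj) with h' | ⟨qq, hq1, hq2⟩
          · left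
            exact h'
          · right
            exact ⟨qq, by rw [getLast?_cons_of_ne_nil _ hT'ne]; exact hq1, hq2⟩
      · intro b' hb'
        by_cases hb'M' : b' ∈ M'.taxa
        · rcases A5 b' hb'M' with h' | h'
          · left
            simp only [List.map_cons, List.mem_cons]
            exact Or.inr h'
          · right
            rw [hfold]
            exact h'
        · left
          have hb'a : b' = a := by
            rcases htax' with h' | h'
            · rw [h'] at hb'M'
              by_contra hne'
              exact hb'M' (Finset.mem_erase.2 ⟨hne', hb'⟩)
            · rw [h'] at hb'M'
              exact absurd hb' hb'M'
          simp [hb'a]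
      · intro _
        cases T' with
        | nil =>
          refine ⟨(a, b), by simp, ?_⟩
          have hsl : M'.IsSingleLeaf := A1
          obtain ⟨x, hxT, hxe⟩ := singleton_taxa hExc' hsl
          have hbx : b = x := Finset.mem_singleton.1 (hxe ▸ hbT')
          rw [hfold]
          rw [show M'.reduceSeq [] = M' from rfl, hxe, hbx]
        | cons c rest =>
          obtain ⟨qq, hq1, hq2⟩ := A6 (by simp)
          refine ⟨qq, by rw [getLast?_cons_of_ne_nil _ (by simp)]; exact hq1, ?_⟩
          rw [hfold]
          exact hq2
      · intro k hk
        match k, hk with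
        | 0, hk =>
          intro heq
          have : M' = M := heq
          rw [this] at hcard'
          omega
        | (k' + 1), hk =>
          intro heq
          exact A7 k' (by simpa using hk) heq

end Network

end Aux6

section Aux7

namespace Network

variable {X : Type}

lemma mem_take_of_get {α : Type _} (l : List α) {i n : ℕ} (h : i < l.length) (h2 : i < n) :
    l.get ⟨i, h⟩ ∈ l.take n := by
  have h3 : i < (l.take n).length := by rw [List.length_take]; omega
  have : (l.take n).get ⟨i, h3⟩ = l.get ⟨i, h⟩ := by simp [List.getElem_take]
  rw [← this]; exact List.get_mem _ _

lemma mem_drop_of_get {α : Type _} (l : List α) {i k : ℕ} (hk : k < l.length) (hik : i ≤ k) :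
    l.get ⟨k, hk⟩ ∈ l.drop i := by
  have h2 : k - i < (l.drop i).length := by rw [List.length_drop]; omega
  have : (l.drop i).get ⟨k - i, h2⟩ = l.get ⟨k, hk⟩ := by
    simp [List.getElem_drop]
    congr 1
    omega
  rw [← this]; exact List.get_mem _ _

lemma reduceSeq_append (N : Network X) (L1 L2 : List (X × X)) :
    N.reduceSeq (L1 ++ L2) = (N.reduceSeq L1).reduceSeq L2 := by
  simp [reduceSeq, List.foldl_append]

end Network


namespace Network

variable {X : Type}

lemma get_append_left' {α : Type _} (l₁ l₂ : List α) {i : ℕ} (h : i < l₁.length)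
    (h' : i < (l₁ ++ l₂).length) : (l₁ ++ l₂).get ⟨i, h'⟩ = l₁.get ⟨i, h⟩ := by
  simp only [List.get_eq_getElem]
  exact List.getElem_append_left h

lemma get_append_right' {α : Type _} (l₁ l₂ : List α) {i : ℕ} (h : l₁.length ≤ i)
    (h' : i < (l₁ ++ l₂).length) (h2 : i - l₁.length < l₂.length) :
    (l₁ ++ l₂).get ⟨i, h'⟩ = l₂.get ⟨i - l₁.length, h2⟩ := by
  simp only [List.get_eq_getElem]
  exact List.getElem_append_right h

lemma take_succ_get {α : Type _} (l : List α) {k : ℕ} (hk : k < l.length) :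
    l.take (k + 1) = l.take k ++ [l.get ⟨k, hk⟩] := by
  rw [List.take_succ, List.getElem?_eq_getElem hk]
  simp [List.get_eq_getElem]

lemma getLast?_eq_get_last {α : Type _} (l : List α) (h : l ≠ [])
    (hh : l.length - 1 < l.length) :
    l.getLast? = some (l.get ⟨l.length - 1, hh⟩) := by
  rw [List.getLast?_eq_getLast_of_ne_nil h, List.getLast_eq_getElem]
  rfl

end Network

end Aux7

open Network

/-- a partial TCS each of whose elements reduces something in a
semi-binary tree-child network `N` extends to a minimal TCS for `N`. -/
theorem partial_TCS_extends_to_minimal_TCS (X : Type) (N : Network X)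
    (hN : N.IsPhylo) (hsb : N.SemiBinary) (htc : N.IsTreeChild)
    (S : List (X × X)) (hpart : IsPartialTCS S)
    (hchange : ∀ i < S.length,
      N.reduceSeq (S.take (i + 1)) ≠ N.reduceSeq (S.take i)) :
    ∃ T : List (X × X), IsMinimalTCS (S ++ T) N := by
  classical
  obtain ⟨T₀, hTCS0⟩ := hpart
  obtain ⟨⟨hdist0, _⟩, hord0⟩ := hTCS0
  set Fk : ℕ → Set X :=
    fun k => {z | ∃ i, ∃ hi : i < S.length, i < k ∧ (S.get ⟨i, hi⟩).1 = z} with hFk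
  have hstep : ∀ k (hk : k < S.length),
      N.reduceSeq (S.take (k + 1)) = (N.reduceSeq (S.take k)).reducePair (S.get ⟨k, hk⟩) := by
    intro k hk
    rw [take_succ_get S hk, reduceSeq_append]
    rfl
  have hredk : ∀ k (hk : k < S.length),
      (N.reduceSeq (S.take k)).ReduciblePair (S.get ⟨k, hk⟩).1 (S.get ⟨k, hk⟩).2 := by
    intro k hk
    apply reducible_of_change
    intro hh
    exact hchange k hk ((hstep k hk).trans hh)
  have hSsecond : ∀ k (hk : k < S.length), (S.get ⟨k, hk⟩).2 ∉ Fk k := by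
    intro k hk hmem
    simp only [hFk, Set.mem_setOf_eq] at hmem
    obtain ⟨i, hi, hik, heq⟩ := hmem
    have hiST : i < (S ++ T₀).length := by rw [List.length_append]; omega
    have hkST : k < (S ++ T₀).length := by rw [List.length_append]; omega
    refine hord0 i k hiST hkST hik ?_
    rw [get_append_left' S T₀ hi hiST, get_append_left' S T₀ hk hkST, heq]
  have hSfacts : ∀ k, k ≤ S.length →
      Exc (N.reduceSeq (S.take k)) ∅ ∧ Phi (N.reduceSeq (S.take k)) (Fk k) := by
    intro k
    induction k with
    | zero =>
      intro _
      constructor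
      · rw [show S.take 0 = ([] : List (X × X)) from rfl]
        exact (exc_empty_iff N).2 ⟨hN, hsb, htc⟩
      · intro x hx
        exfalso
        simp only [hFk, Set.mem_setOf_eq] at hx
        obtain ⟨i, hi, hik, _⟩ := hx
        omega
    | succ k ihk =>
      intro hk1
      have hk : k < S.length := hk1
      obtain ⟨hE, hP⟩ := ihk (Nat.le_of_lt hk)
      obtain ⟨e1, _, _, _, _, e6⟩ := step_all hE (hredk k hk)
      have hFeq : Fk (k + 1) = insert (S.get ⟨k, hk⟩).1 (Fk k) := by
        ext z
        simp only [hFk, Set.mem_setOf_eq, Set.mem_insert_iff]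
        constructor
        · rintro ⟨i, hi, hik, heq⟩
          by_cases hik' : i < k
          · exact Or.inr ⟨i, hi, hik', heq⟩
          · have hik'' : i = k := by omega
            subst hik''
            exact Or.inl (by rw [← heq])
        · rintro (heq | ⟨i, hi, hik, heq⟩)
          · exact ⟨k, hk, by omega, heq.symm⟩
          · exact ⟨i, hi, by omega, heq⟩
      constructor
      · rw [hstep k hk]
        exact e1
      · rw [hstep k hk, hFeq]
        exact e6 (Fk k) (hSsecond k hk) hP
  have hEQ0 : N.reduceSeq (S.take S.length) = N.reduceSeq S := by rw [List.take_length]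
  obtain ⟨hE0, hP0⟩ := hSfacts S.length le_rfl
  rw [hEQ0] at hE0 hP0
  have hstepfacts : ∀ k (hk : k < S.length),
      ((N.reduceSeq (S.take (k + 1))).taxa
          = (N.reduceSeq (S.take k)).taxa.erase (S.get ⟨k, hk⟩).1 ∨
        (N.reduceSeq (S.take (k + 1))).taxa = (N.reduceSeq (S.take k)).taxa) ∧
      (S.get ⟨k, hk⟩).2 ∈ (N.reduceSeq (S.take (k + 1))).taxa := by
    intro k hk
    obtain ⟨hE, _⟩ := hSfacts k (Nat.le_of_lt hk)
    obtain ⟨_, _, h3, h4, _, _⟩ := step_all hE (hredk k hk)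
    rw [hstep k hk]
    exact ⟨h3, h4⟩
  obtain ⟨T, A1, A2, A3, A4, A5, A6, A7⟩ :=
    aux_reduce (N.reduceSeq S).V.card (N.reduceSeq S) le_rfl hE0 (Fk S.length) hP0
  refine ⟨T, ⟨⟨?_, ?_⟩, ?_⟩, ?_, ?_⟩
  · -- distinct coordinates
    intro p hp
    rcases List.mem_append.1 hp with hp' | hp'
    · exact hdist0 p (List.mem_append_left T₀ hp')
    · exact A2 p hp'
  · -- CPS condition
    intro i hi
    by_cases hiS : i < S.length
    · have hgetS : (S ++ T).get ⟨i, hi⟩ = S.get ⟨i, hiS⟩ := get_append_left' S T hiS hi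
      have hchain : ∀ m, i + 1 ≤ m → m ≤ S.length →
          (S.get ⟨i, hiS⟩).2 ∈ (N.reduceSeq (S.take m)).taxa ∨
            (∃ k, ∃ hk : k < S.length, i + 1 ≤ k ∧
              (S.get ⟨k, hk⟩).1 = (S.get ⟨i, hiS⟩).2) := by
        intro m
        induction m with
        | zero => intro h1 _; omega
        | succ m ihm =>
          intro h1 h2
          have hm : m < S.length := by omega
          by_cases hmi : m < i + 1
          · have hmi' : m = i := by omega
            subst hmi'
            exact Or.inl (hstepfacts m hm).2
          · rcases ihm (by omega) (by omega) with hmem | hfound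
            · rcases (hstepfacts m hm).1 with he | he
              · by_cases hbmem : (S.get ⟨i, hiS⟩).2 ∈ (N.reduceSeq (S.take (m + 1))).taxa
                · exact Or.inl hbmem
                · right
                  refine ⟨m, hm, by omega, ?_⟩
                  rw [he] at hbmem
                  by_contra hne'
                  exact hbmem (Finset.mem_erase.2 ⟨fun hh => hne' hh.symm, hmem⟩)
              · exact Or.inl (by rw [he]; exact hmem)
            · exact Or.inr hfound
      rcases hchain S.length (by omega) le_rfl with hmem | ⟨k, hk, hik, heq⟩
      · rw [hEQ0] at hmem
        rcases A5 _ hmem with hbT | hbT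
        · left
          have hdropeq : (S ++ T).drop (i + 1) = S.drop (i + 1) ++ T :=
            List.drop_append_of_le_length (by omega)
          rw [hgetS, hdropeq, List.map_append]
          exact List.mem_append_right _ hbT
        · right
          cases T with
          | nil =>
            have hSne : S ≠ [] := by
              intro hh
              rw [hh] at hiS
              simp at hiS
            have hl0 : 0 < S.length := List.length_pos_iff.2 hSne
            have hmlt : S.length - 1 < S.length := by omega
            have hlast : (S ++ ([] : List (X × X))).getLast? =
                some (S.get ⟨S.length - 1, hmlt⟩) := by
              rw [List.append_nil]
              exact getLast?_eq_get_last S hSne hmlt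
            refine ⟨S.get ⟨S.length - 1, hmlt⟩, hlast, ?_⟩
            have h1 : (S.get ⟨S.length - 1, hmlt⟩).2
                ∈ (N.reduceSeq (S.take (S.length - 1 + 1))).taxa :=
              (hstepfacts (S.length - 1) hmlt).2
            have hm1 : S.length - 1 + 1 = S.length := by omega
            rw [hm1, hEQ0] at h1
            have hbT' : (N.reduceSeq S).taxa = {(S.get ⟨i, hiS⟩).2} := hbT
            rw [hbT'] at h1
            rw [hgetS]
            exact (Finset.mem_singleton.1 h1).symm
          | cons c rest =>
            obtain ⟨qq, hq1, hq2⟩ := A6 (by simp)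
            refine ⟨qq, by
              rw [List.getLast?_append_of_ne_nil _ (by simp : (c :: rest) ≠ [])]
              exact hq1, ?_⟩
            rw [hgetS]
            exact Finset.singleton_inj.1 (hbT.symm.trans hq2)
      · left
        have hkST : k < (S ++ T).length := by rw [List.length_append]; omega
        have hgetk : (S ++ T).get ⟨k, hkST⟩ = S.get ⟨k, hk⟩ := get_append_left' S T hk hkST
        have hmem : (S ++ T).get ⟨k, hkST⟩ ∈ (S ++ T).drop (i + 1) :=
          mem_drop_of_get _ hkST (by omega)
        rw [hgetS]
        exact List.mem_map.2 ⟨_, hmem, by rw [hgetk, heq]⟩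
    · push_neg at hiS
      have hjT : i - S.length < T.length := by
        have := hi
        rw [List.length_append] at this
        omega
      have hgetT : (S ++ T).get ⟨i, hi⟩ = T.get ⟨i - S.length, hjT⟩ :=
        get_append_right' S T hiS hi hjT
      rcases A4 (i - S.length) hjT with hmem | ⟨qq, hq1, hq2⟩
      · left
        have hdropeq : (S ++ T).drop (i + 1) = T.drop (i - S.length + 1) := by
          have heq' : i + 1 = S.length + (i - S.length + 1) := by omega
          rw [heq', List.drop_length_add_append]
        rw [hgetT, hdropeq]
        exact hmem
      · right
        have hTne : T ≠ [] := by
          intro hh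
          rw [hh] at hjT
          simp at hjT
        exact ⟨qq, by rw [List.getLast?_append_of_ne_nil _ hTne]; exact hq1,
          by rw [hgetT]; exact hq2⟩
  · -- TCS ordering condition
    intro i j hi hj hij
    by_cases hjS : j < S.length
    · have hiS : i < S.length := by omega
      have hiST : i < (S ++ T₀).length := by rw [List.length_append]; omega
      have hjST : j < (S ++ T₀).length := by rw [List.length_append]; omega
      rw [get_append_left' S T hiS hi, get_append_left' S T hjS hj,
        ← get_append_left' S T₀ hiS hiST, ← get_append_left' S T₀ hjS hjST]
      exact hord0 i j hiST hjST hij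
    · push_neg at hjS
      have hj'T : j - S.length < T.length := by
        have := hj
        rw [List.length_append] at this
        omega
      have hgetj : (S ++ T).get ⟨j, hj⟩ = T.get ⟨j - S.length, hj'T⟩ :=
        get_append_right' S T hjS hj hj'T
      obtain ⟨B1, B2⟩ := A3 (j - S.length) hj'T
      by_cases hiS : i < S.length
      · rw [get_append_left' S T hiS hi, hgetj]
        intro heq
        apply B1
        simp only [hFk, Set.mem_setOf_eq]
        exact ⟨i, hiS, hiS, heq⟩
      · push_neg at hiS
        have hi'T : i - S.length < T.length := by
          have := hi
          rw [List.length_append] at this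
          omega
        have hgeti : (S ++ T).get ⟨i, hi⟩ = T.get ⟨i - S.length, hi'T⟩ :=
          get_append_right' S T hiS hi hi'T
        rw [hgeti, hgetj]
        intro heq
        apply B2
        exact List.mem_map.2 ⟨T.get ⟨i - S.length, hi'T⟩,
          mem_take_of_get T hi'T (by omega), heq⟩
  · -- Reduces
    rw [Reduces, reduceSeq_append]
    exact A1
  · -- minimality
    intro i hi
    by_cases hiS : i < S.length
    · have t1 : (S ++ T).take (i + 1) = S.take (i + 1) :=
        List.take_append_of_le_length (by omega)
      have t2 : (S ++ T).take i = S.take i := List.take_append_of_le_length (by omega)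
      rw [t1, t2]
      exact hchange i hiS
    · push_neg at hiS
      have hkT : i - S.length < T.length := by
        rw [List.length_append] at hi
        omega
      have t1 : (S ++ T).take (i + 1) = S ++ T.take (i - S.length + 1) := by
        have heq' : i + 1 = S.length + (i - S.length + 1) := by omega
        rw [heq', List.take_length_add_append]
      have t2 : (S ++ T).take i = S ++ T.take (i - S.length) := by
        have heq' : i = S.length + (i - S.length) := by omega
        conv_lhs => rw [heq']
        rw [List.take_length_add_append]
      rw [t1, t2, reduceSeq_append, reduceSeq_append]
      exact A7 (i - S.length) hkT
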